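/- arXiv:1806.03351 — 6 statements merged into one kernel-verified Lean document; each statement's English description precedes it below -/
import Mathlib

section
/- Let Y = Y₂(n, c/√n) with constant c < 1/√γ, γ = 256/27. Then the expected number X of triangulations of the fixed cycle [123] contained in Y satisfies E[X] = O(1/√n); in particular, with probability tending to 1 as n → ∞, the cycle [123] is not triangulated in Y. -/
open Filter

noncomputable section

/-- Let `Y = Y₂(n, c/√n)` with constant `c < 1/√γ`, `γ = 256/27`. Given that the number
`N n k` of properly `n`-labeled triangulations of `[123]` with `k` internal vertices is at
most `(γn)^k`, and each such triangulation (having `2k+1` faces) appears with probability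
`(c/√n)^(2k+1)`, the expected number `EX n` of triangulations of `[123]` contained in `Y`
is `O(1/√n)`; in particular (by Markov's inequality) the probability that `[123]` is
triangulated in `Y` tends to `0` as `n → ∞`. -/
theorem expected_triangulations_small (c : ℝ) (hc0 : 0 < c)
    (hc : c < 1 / Real.sqrt ((256 : ℝ) / 27))
    (N : ℕ → ℕ → ℕ)
    (hN : ∀ n k : ℕ, (N n k : ℝ) ≤ ((256 : ℝ) / 27 * (n : ℝ)) ^ k)
    (EX : ℕ → ℝ)
    (hEX : ∀ n : ℕ, EX n =
      ∑ k ∈ Finset.range (n - 2), (N n k : ℝ) * (c / Real.sqrt n) ^ (2 * k + 1))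
    (Pr : ℕ → ℝ) (hPr0 : ∀ n, 0 ≤ Pr n) (hMarkov : ∀ n, Pr n ≤ EX n) :
    (∃ C : ℝ, ∀ n : ℕ, 1 ≤ n → EX n ≤ C / Real.sqrt n) ∧
      Tendsto Pr atTop (nhds 0) := by
  set γ : ℝ := (256 : ℝ) / 27 with hγ
  have hγpos : (0 : ℝ) < γ := by norm_num [hγ]
  have hγs : (0 : ℝ) < Real.sqrt γ := Real.sqrt_pos.mpr hγpos
  have hq1 : γ * c ^ 2 < 1 := by
    have hcs : c < 1 / Real.sqrt γ := hc
    have h2 : c ^ 2 < (1 / Real.sqrt γ) ^ 2 := by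
      apply sq_lt_sq' _ hcs
      have : 0 < 1 / Real.sqrt γ := by positivity
      linarith
    have h3 : (1 / Real.sqrt γ) ^ 2 = 1 / γ := by
      rw [div_pow, one_pow, Real.sq_sqrt hγpos.le]
    rw [h3] at h2
    calc γ * c ^ 2 < γ * (1 / γ) := by
          exact (mul_lt_mul_iff_right₀ hγpos).mpr h2
      _ = 1 := by field_simp
  set q : ℝ := γ * c ^ 2 with hqdef
  have hq0 : 0 ≤ q := by positivity
  -- geometric sum bound
  have hgeom : ∀ m : ℕ, ∑ k ∈ Finset.range m, q ^ k ≤ (1 - q)⁻¹ := by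
    intro m
    have := Summable.sum_le_tsum (Finset.range m) (fun k _ => by positivity)
      (summable_geometric_of_lt_one hq0 hq1)
    rwa [tsum_geometric_of_lt_one hq0 hq1] at this
  have key : ∀ n : ℕ, 1 ≤ n → EX n ≤ (c * (1 - q)⁻¹) / Real.sqrt n := by
    intro n hn
    have hsn : (0 : ℝ) < Real.sqrt n := Real.sqrt_pos.mpr (by exact_mod_cast hn)
    rw [hEX n]
    have hterm : ∀ k ∈ Finset.range (n - 2),
        (N n k : ℝ) * (c / Real.sqrt n) ^ (2 * k + 1)
          ≤ (c / Real.sqrt n) * q ^ k := by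
      intro k _
      have hpos : (0 : ℝ) ≤ (c / Real.sqrt n) ^ (2 * k + 1) := by positivity
      have h1 : (N n k : ℝ) * (c / Real.sqrt n) ^ (2 * k + 1)
          ≤ (γ * n) ^ k * (c / Real.sqrt n) ^ (2 * k + 1) :=
        mul_le_mul_of_nonneg_right (hN n k) hpos
      refine h1.trans_eq ?_
      have h2 : (c / Real.sqrt n) ^ (2 * k + 1)
          = (c / Real.sqrt n) * (c ^ 2 / n) ^ k := by
        rw [pow_succ, pow_mul, mul_comm]
        congr 2
        rw [div_pow, Real.sq_sqrt (Nat.cast_nonneg n)]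
      rw [h2]
      have hn0 : (n : ℝ) ≠ 0 := by positivity
      rw [← mul_assoc, mul_comm ((γ * n) ^ k), mul_assoc, ← mul_pow]
      congr 2
      field_simp [hqdef]
      ring
    calc ∑ k ∈ Finset.range (n - 2), (N n k : ℝ) * (c / Real.sqrt n) ^ (2 * k + 1)
        ≤ ∑ k ∈ Finset.range (n - 2), (c / Real.sqrt n) * q ^ k :=
          Finset.sum_le_sum hterm
      _ = (c / Real.sqrt n) * ∑ k ∈ Finset.range (n - 2), q ^ k := by
          rw [Finset.mul_sum]
      _ ≤ (c / Real.sqrt n) * (1 - q)⁻¹ := by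
          apply mul_le_mul_of_nonneg_left (hgeom _) (by positivity)
      _ = (c * (1 - q)⁻¹) / Real.sqrt n := by ring
  refine ⟨⟨c * (1 - q)⁻¹, key⟩, ?_⟩
  have hC0 : 0 ≤ c * (1 - q)⁻¹ := by
    have : 0 < 1 - q := by linarith
    positivity
  have hub : Tendsto (fun n : ℕ => (c * (1 - q)⁻¹) / Real.sqrt n) atTop (nhds 0) := by
    apply Tendsto.div_atTop tendsto_const_nhds
    have hs : Tendsto Real.sqrt atTop atTop := by
      refine tendsto_atTop_atTop.2 fun b => ⟨max b 0 ^ 2, fun x hx => ?_⟩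
      calc b ≤ max b 0 := le_max_left _ _
        _ = Real.sqrt (max b 0 ^ 2) := (Real.sqrt_sq (le_max_right _ _)).symm
        _ ≤ Real.sqrt x := Real.sqrt_le_sqrt hx
    exact hs.comp tendsto_natCast_atTop_atTop
  refine squeeze_zero' (Eventually.of_forall hPr0) ?_ hub
  filter_upwards [eventually_ge_atTop 1] with n hn
  exact (hMarkov n).trans (key n hn)

end
end

section
/- If c < 1/√γ and X is the number of n-labeled triangulations of [123] contained in Y₂(n, c/√n), then E[X] ≤ (c/√n) · Σ_{k=0}^{n-3} (γ c²)^k ≤ (c/√n) · 1/(1 − γc²). -/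
noncomputable section

/-- If `c < 1/√γ` (`γ = 256/27`) and there are at most `(γn)^k` properly `n`-labeled
triangulations of `[123]` with `k` internal vertices, each with `2k+1` faces present
independently with probability `p = c/√n`, then the expected number of triangulations of
`[123]` in `Y₂(n, c/√n)` satisfies
`E[X] ≤ (c/√n) Σ_{k=0}^{n-3} (γc²)^k ≤ (c/√n) · 1/(1 − γc²)`. -/
theorem expected_triangulations_bound (c : ℝ) (n : ℕ) (hn : 3 ≤ n) (hc0 : 0 < c)
    (hc : c < 1 / Real.sqrt ((256 : ℝ) / 27))
    (N : ℕ → ℕ) (hN : ∀ k : ℕ, (N k : ℝ) ≤ ((256 : ℝ) / 27 * (n : ℝ)) ^ k) :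
    (∑ k ∈ Finset.range (n - 2), (N k : ℝ) * (c / Real.sqrt n) ^ (2 * k + 1) ≤
        c / Real.sqrt n * ∑ k ∈ Finset.range (n - 2), ((256 : ℝ) / 27 * c ^ 2) ^ k) ∧
      (c / Real.sqrt n * ∑ k ∈ Finset.range (n - 2), ((256 : ℝ) / 27 * c ^ 2) ^ k ≤
        c / Real.sqrt n * (1 / (1 - (256 : ℝ) / 27 * c ^ 2))) := by
  have hn0 : (0 : ℝ) < n := by positivity
  have hs : (0 : ℝ) < Real.sqrt n := Real.sqrt_pos.mpr hn0
  have hp : (0 : ℝ) < c / Real.sqrt n := div_pos hc0 hs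
  have hγ : (0 : ℝ) < (256 : ℝ) / 27 := by norm_num
  have hsγ : (0 : ℝ) < Real.sqrt ((256 : ℝ) / 27) := Real.sqrt_pos.mpr hγ
  have hr : (256 : ℝ) / 27 * c ^ 2 < 1 := by
    have h1 : c * Real.sqrt ((256 : ℝ) / 27) < 1 := by
      calc c * Real.sqrt ((256 : ℝ) / 27)
          < 1 / Real.sqrt ((256 : ℝ) / 27) * Real.sqrt ((256 : ℝ) / 27) := by
            exact mul_lt_mul_of_pos_right hc hsγ
        _ = 1 := by field_simp
    have h2 : (c * Real.sqrt ((256:ℝ)/27)) ^ 2 < 1 ^ 2 := by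
      apply pow_lt_pow_left₀ h1 (by positivity) (by norm_num)
    calc (256:ℝ)/27 * c ^ 2 = (c * Real.sqrt ((256:ℝ)/27)) ^ 2 := by
          rw [mul_pow, Real.sq_sqrt hγ.le]; ring
      _ < 1 := by simpa using h2
  constructor
  · rw [Finset.mul_sum]
    apply Finset.sum_le_sum
    intro k _
    have hpk : (c / Real.sqrt n) ^ (2 * k + 1)
        = c / Real.sqrt n * (c ^ 2 / n) ^ k := by
      rw [pow_succ, pow_mul, div_pow, Real.sq_sqrt hn0.le, mul_comm]
    rw [hpk, ← mul_assoc, mul_comm _ (c / Real.sqrt n), mul_assoc]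
    apply mul_le_mul_of_nonneg_left _ hp.le
    have heq : ((256:ℝ)/27 * c ^ 2) ^ k = ((256:ℝ)/27 * (n:ℝ)) ^ k * (c ^ 2 / n) ^ k := by
      rw [← mul_pow]
      congr 1
      field_simp
    rw [heq]
    exact mul_le_mul_of_nonneg_right (hN k) (by positivity)
  · apply mul_le_mul_of_nonneg_left _ hp.le
    rw [geom_sum_eq (by linarith : (256:ℝ)/27 * c ^ 2 ≠ 1)]
    have hpow : (0:ℝ) ≤ ((256:ℝ)/27 * c ^ 2) ^ (n - 2) := by positivity
    rw [show (((256:ℝ)/27 * c ^ 2) ^ (n - 2) - 1) / ((256:ℝ)/27 * c ^ 2 - 1)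
        = (1 - ((256:ℝ)/27 * c ^ 2) ^ (n - 2)) / (1 - (256:ℝ)/27 * c ^ 2) by
      rw [div_eq_div_iff (by linarith) (by linarith)]; ring]
    rw [div_le_div_iff₀ (by linarith) (by linarith)]
    nlinarith
end
end

section
/- Let t_k = 6(4k+1)!/(3k+3)!, i+j=k with k/2 < j < k, and α_i := (6(2i+1)/((3i+3)(3i+2))) · C(4i+1, i) · γ^{−i} with γ = 256/27. Then t_k^j / t_k = C(k,i)·t_i·t_j·(2i+1)/t_k = (1 + o_k(1)) · α_i · (k/j)^{5/2}. -/
noncomputable section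

/-- Tutte's number of triangulations of a 3-cycle with `k` labeled internal vertices. -/
def tutte (k : ℕ) : ℕ := 6 * Nat.factorial (4 * k + 1) / Nat.factorial (3 * k + 3)

/-- `α_i = (6(2i+1)/((3i+3)(3i+2))) · C(4i+1, i) · γ^{−i}` with `γ = 256/27`. -/
def alpha (i : ℕ) : ℝ :=
  6 * (2 * (i : ℝ) + 1) / ((3 * (i : ℝ) + 3) * (3 * (i : ℝ) + 2)) *
    (Nat.choose (4 * i + 1) i : ℝ) / ((256 : ℝ) / 27) ^ i

open Filter Real Stirling Nat Topology

namespace DenseFrac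

/-- `q n = ((n+1)/n)^(n+1)`, tending to `e`. -/
def q (n : ℕ) : ℝ := (((n : ℝ) + 1) / n) ^ (n + 1)

lemma q_pos {n : ℕ} (hn : 1 ≤ n) : 0 < q n := by
  have : (0:ℝ) < n := by exact_mod_cast hn
  unfold q; positivity

lemma tendsto_q : Tendsto q atTop (𝓝 (Real.exp 1)) := by
  have h1 := Real.tendsto_one_add_div_pow_exp 1
  have h2 : Tendsto (fun n : ℕ => 1 + 1 / (n : ℝ)) atTop (𝓝 1) := by
    have := tendsto_one_div_atTop_nhds_zero_nat (𝕜 := ℝ)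
    simpa using (tendsto_const_nhds (x := (1:ℝ))).add this
  have h3 := h1.mul h2
  rw [mul_one] at h3
  apply h3.congr'
  filter_upwards [eventually_ge_atTop 1] with n hn
  have hn' : (0:ℝ) < n := by exact_mod_cast hn
  have : ((n : ℝ) + 1) / n = 1 + 1 / n := by field_simp
  rw [q, this, pow_succ]

lemma stirlingSeq_pos {n : ℕ} (hn : 1 ≤ n) : 0 < stirlingSeq n := by
  obtain ⟨m, rfl⟩ := Nat.exists_eq_add_of_le hn
  simpa [Nat.add_comm] using stirlingSeq'_pos m

lemma fact_eq {n : ℕ} (hn : 1 ≤ n) :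
    (n ! : ℝ) = stirlingSeq n * (Real.sqrt (2 * n) * ((n : ℝ) / Real.exp 1) ^ n) := by
  have hn' : (0:ℝ) < n := by exact_mod_cast hn
  have hD : 0 < Real.sqrt (2 * n) * ((n : ℝ) / Real.exp 1) ^ n := by positivity
  rw [stirlingSeq, div_mul_cancel₀ _ hD.ne']

lemma tutte_dvd (k : ℕ) : (3 * k + 3)! ∣ 6 * (4 * k + 1)! := by
  match k with
  | 0 => decide
  | 1 => decide
  | (m + 2) =>
    exact Dvd.dvd.mul_left (Nat.factorial_dvd_factorial (by omega)) 6

lemma tutte_mul (k : ℕ) : tutte k * (3 * k + 3)! = 6 * (4 * k + 1)! :=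
  Nat.div_mul_cancel (tutte_dvd k)

lemma tutte_pos (k : ℕ) : 0 < tutte k :=
  Nat.div_pos (Nat.le_of_dvd (by positivity) (tutte_dvd k)) (Nat.factorial_pos _)

lemma tutte_cast (k : ℕ) : (tutte k : ℝ) = 6 * (4 * k + 1)! / (3 * k + 3)! := by
  rw [eq_div_iff (by exact_mod_cast (Nat.factorial_pos (3 * k + 3)).ne')]
  exact_mod_cast tutte_mul k

lemma fact_3succ (i : ℕ) : ((3 * i + 3)! : ℝ)
    = (3 * (i:ℝ) + 3) * (3 * (i:ℝ) + 2) * ((3 * i + 1)! : ℝ) := by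
  rw [show 3 * i + 3 = 3 * i + 2 + 1 by ring, Nat.factorial_succ,
    show 3 * i + 2 = 3 * i + 1 + 1 by ring, Nat.factorial_succ]
  push_cast; ring

lemma alpha_eq (i : ℕ) : alpha i =
    6 * (2 * (i:ℝ) + 1) * ((4 * i + 1)! : ℝ) / ((i ! : ℝ) * ((3 * i + 3)! : ℝ))
      / ((256 : ℝ) / 27) ^ i := by
  have h1 : (Nat.choose (4 * i + 1) i : ℝ) = ((4 * i + 1)! : ℝ) / ((i ! : ℝ) * ((3 * i + 1)! : ℝ)) := by
    rw [Nat.cast_choose ℝ (by omega), show 4 * i + 1 - i = 3 * i + 1 by omega]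
  have h2 := fact_3succ i
  have hi : (0:ℝ) < (i ! : ℝ) := by exact_mod_cast i.factorial_pos
  have h31 : (0:ℝ) < ((3 * i + 1)! : ℝ) := by exact_mod_cast (3 * i + 1).factorial_pos
  have h33 : (0:ℝ) < (3 * (i:ℝ) + 3) := by positivity
  have h32 : (0:ℝ) < (3 * (i:ℝ) + 2) := by positivity
  have hg : (0:ℝ) < ((256 : ℝ) / 27) ^ i := by positivity
  rw [alpha, h1, h2]
  field_simp

lemma alpha_pos (i : ℕ) : 0 < alpha i := by
  rw [alpha_eq]
  have hi : (0:ℝ) < (i ! : ℝ) := by exact_mod_cast i.factorial_pos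
  have h4 : (0:ℝ) < ((4 * i + 1)! : ℝ) := by exact_mod_cast (4 * i + 1).factorial_pos
  have h3 : (0:ℝ) < ((3 * i + 3)! : ℝ) := by exact_mod_cast (3 * i + 3).factorial_pos
  positivity

/-- Stirling-factor ratio. -/
def A (k j : ℕ) : ℝ :=
  stirlingSeq k * stirlingSeq (4 * j + 1) * stirlingSeq (3 * k + 3) /
    (stirlingSeq j * stirlingSeq (3 * j + 3) * stirlingSeq (4 * k + 1))

/-- `(1+1/n)^(n+1)`-type correction factors. -/
def V (k j : ℕ) : ℝ := q (4 * j) * (q k) ^ 3 / ((q j) ^ 3 * q (4 * k))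

/-- square-root correction factor. -/
def W (k j : ℕ) : ℝ :=
  Real.sqrt ((4 * (j:ℝ) + 1) * ((k:ℝ) + 1) / (((j:ℝ) + 1) * (4 * (k:ℝ) + 1)))

lemma base_shift {x : ℝ} (hx : x ≠ 0) (m : ℕ) :
    (x + 1) ^ m = x ^ m * ((x + 1) / x) ^ m := by
  rw [div_pow, mul_div_cancel₀]
  exact pow_ne_zero _ hx

lemma rpow_five_halves {x : ℝ} (hx : 0 < x) :
    x ^ ((5 : ℝ) / 2) = x ^ 2 * Real.sqrt x := by
  rw [Real.sqrt_eq_rpow, ← Real.rpow_natCast x 2, ← Real.rpow_add hx]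
  norm_num

lemma abstract (a1 x1 p1 a2 x2 p2 a3 x3 p3 b1 y1 r1 b2 y2 r2 b3 y3 r3 c t sq v w : ℝ)
    (hb1 : b1 ≠ 0) (hb2 : b2 ≠ 0) (hb3 : b3 ≠ 0)
    (hy1 : y1 ≠ 0) (hy2 : y2 ≠ 0) (hy3 : y3 ≠ 0)
    (hr1 : r1 ≠ 0) (hr2 : r2 ≠ 0) (hr3 : r3 ≠ 0)
    (hX : x1 * x2 * x3 = sq * w * (y1 * y2 * y3))
    (hP : p1 * p2 * p3 = c * t * v * (r1 * r2 * r3)) :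
    a1 * (x1 * p1) * (a2 * (x2 * p2)) * (a3 * (x3 * p3)) /
      (b1 * (y1 * r1) * (b2 * (y2 * r2)) * (b3 * (y3 * r3)))
    = c * (t * sq) * (a1 * a2 * a3 / (b1 * b2 * b3) * v * w) := by
  have e1 : a1 * (x1 * p1) * (a2 * (x2 * p2)) * (a3 * (x3 * p3))
      = a1 * a2 * a3 * (x1 * x2 * x3 * (p1 * p2 * p3)) := by ring
  rw [e1, hX, hP]
  field_simp

lemma key2 (i j : ℕ) (hj : 1 ≤ j) :
    (((i + j)! : ℝ) * ((4 * j + 1)! : ℝ) * ((3 * (i + j) + 3)! : ℝ)) /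
      ((j ! : ℝ) * ((3 * j + 3)! : ℝ) * ((4 * (i + j) + 1)! : ℝ))
    = (27 / 256 : ℝ) ^ i * (((i + j : ℕ) : ℝ) / (j : ℝ)) ^ ((5 : ℝ) / 2) *
        (A (i + j) j * V (i + j) j * W (i + j) j) := by
  have hk : 1 ≤ i + j := by omega
  have hjR : (0:ℝ) < (j:ℝ) := by exact_mod_cast hj
  have hkR : (0:ℝ) < ((i + j : ℕ):ℝ) := by exact_mod_cast hk
  have he : (0:ℝ) < Real.exp 1 := Real.exp_pos 1
  have cj : ((4 * j + 1 : ℕ) : ℝ) = 4 * (j:ℝ) + 1 := by push_cast; ring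
  have cj3 : ((3 * j + 3 : ℕ) : ℝ) = 3 * (j:ℝ) + 3 := by push_cast; ring
  have ck : ((4 * (i + j) + 1 : ℕ) : ℝ) = 4 * ((i + j : ℕ):ℝ) + 1 := by push_cast; ring
  have ck3 : ((3 * (i + j) + 3 : ℕ) : ℝ) = 3 * ((i + j : ℕ):ℝ) + 3 := by push_cast; ring
  rw [fact_eq hk, fact_eq (show 1 ≤ 4 * j + 1 by omega), fact_eq (show 1 ≤ 3 * (i + j) + 3 by omega),
      fact_eq hj, fact_eq (show 1 ≤ 3 * j + 3 by omega), fact_eq (show 1 ≤ 4 * (i + j) + 1 by omega),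
      rpow_five_halves (div_pos hkR hjR)]
  unfold A
  refine abstract _ _ _ _ _ _ _ _ _ _ _ _ _ _ _ _ _ _ _ _ _ _ _
    (stirlingSeq_pos hj).ne' (stirlingSeq_pos (by omega)).ne' (stirlingSeq_pos (by omega)).ne'
    ?_ ?_ ?_ ?_ ?_ ?_ ?_ ?_
  · exact (Real.sqrt_pos.mpr (by positivity)).ne'
  · exact (Real.sqrt_pos.mpr (by positivity)).ne'
  · exact (Real.sqrt_pos.mpr (by positivity)).ne'
  · exact (pow_pos (div_pos hjR he) _).ne'
  · exact (pow_pos (div_pos (by positivity) he) _).ne'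
  · exact (pow_pos (div_pos (by positivity) he) _).ne'
  -- the square-root identity
  · simp only [W]
    rw [← pow_left_inj₀ (by positivity) (by positivity) two_ne_zero]
    simp only [mul_pow]
    rw [Real.sq_sqrt (by positivity : (0:ℝ) ≤ 2 * ((i + j : ℕ):ℝ)),
      Real.sq_sqrt (by positivity : (0:ℝ) ≤ 2 * ((4 * j + 1 : ℕ):ℝ)),
      Real.sq_sqrt (by positivity : (0:ℝ) ≤ 2 * ((3 * (i + j) + 3 : ℕ):ℝ)),
      Real.sq_sqrt (by positivity : (0:ℝ) ≤ 2 * ((j : ℕ):ℝ)),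
      Real.sq_sqrt (by positivity : (0:ℝ) ≤ 2 * ((3 * j + 3 : ℕ):ℝ)),
      Real.sq_sqrt (by positivity : (0:ℝ) ≤ 2 * ((4 * (i + j) + 1 : ℕ):ℝ)),
      Real.sq_sqrt (le_of_lt (div_pos hkR hjR)),
      Real.sq_sqrt (by positivity :
        (0:ℝ) ≤ (4 * (j:ℝ) + 1) * (((i + j : ℕ):ℝ) + 1) / (((j:ℝ) + 1) * (4 * ((i + j : ℕ):ℝ) + 1)))]
    have hj1 : ((j:ℝ) + 1) ≠ 0 := by positivity
    have hk1 : (4 * ((i + j : ℕ):ℝ) + 1) ≠ 0 := by positivity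
    push_cast
    field_simp
  -- the power identity
  · rw [cj, cj3, ck, ck3]
    have hq4j : q (4 * j) = ((4 * (j:ℝ) + 1) / (4 * (j:ℝ))) ^ (4 * j + 1) := by
      unfold q
      rw [show ((4 * j : ℕ):ℝ) = 4 * (j:ℝ) by push_cast; ring]
    have hq4k : q (4 * (i + j)) = ((4 * ((i + j : ℕ):ℝ) + 1) / (4 * ((i + j : ℕ):ℝ))) ^ (4 * (i + j) + 1) := by
      unfold q
      rw [show ((4 * (i + j) : ℕ):ℝ) = 4 * ((i + j : ℕ):ℝ) by push_cast; ring]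
    have hb4j : (4 * (j:ℝ) + 1) ^ (4 * j + 1) = (4 * (j:ℝ)) ^ (4 * j + 1) * q (4 * j) := by
      rw [hq4j]; exact base_shift (by positivity) _
    have hb4k : (4 * ((i + j : ℕ):ℝ) + 1) ^ (4 * (i + j) + 1)
        = (4 * ((i + j : ℕ):ℝ)) ^ (4 * (i + j) + 1) * q (4 * (i + j)) := by
      rw [hq4k]; exact base_shift (by positivity) _
    have hb3k : (3 * ((i + j : ℕ):ℝ) + 3) ^ (3 * (i + j) + 3)
        = (3 * ((i + j : ℕ):ℝ)) ^ (3 * (i + j) + 3) * (q (i + j)) ^ 3 := by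
      have h1 : (3 * ((i + j : ℕ):ℝ) + 3) = (3 * ((i + j : ℕ):ℝ)) * ((((i + j : ℕ):ℝ) + 1) / ((i + j : ℕ):ℝ)) := by
        field_simp
      rw [h1, mul_pow]
      congr 1
      rw [show 3 * (i + j) + 3 = ((i + j) + 1) * 3 by ring, pow_mul]
      rfl
    have hb3j : (3 * (j:ℝ) + 3) ^ (3 * j + 3)
        = (3 * (j:ℝ)) ^ (3 * j + 3) * (q j) ^ 3 := by
      have h1 : (3 * (j:ℝ) + 3) = (3 * (j:ℝ)) * (((j:ℝ) + 1) / (j:ℝ)) := by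
        field_simp
      rw [h1, mul_pow]
      congr 1
      rw [show 3 * j + 3 = (j + 1) * 3 by ring, pow_mul]
      rfl
    simp only [div_pow]
    rw [hb4j, hb4k, hb3k, hb3j]
    simp only [V]
    have hq1 : q (4 * j) ≠ 0 := (q_pos (by omega)).ne'
    have hq2 : q (4 * (i + j)) ≠ 0 := (q_pos (by omega)).ne'
    have hq3 : q (i + j) ≠ 0 := (q_pos (by omega)).ne'
    have hq4 : q j ≠ 0 := (q_pos (by omega)).ne'
    have h27 : (27:ℝ) ^ i = 3 ^ (3 * i) := by
      rw [show (27:ℝ) = 3 ^ 3 by norm_num, ← pow_mul]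
    have h256 : (256:ℝ) ^ i = 4 ^ (4 * i) := by
      rw [show (256:ℝ) = 4 ^ 4 by norm_num, ← pow_mul]
    rw [h27, h256]
    simp only [mul_pow]
    generalize hg : Real.exp 1 = E at he ⊢
    field_simp
    ring

lemma main_identity (i j : ℕ) (hj : 1 ≤ j) :
    ((Nat.choose (i + j) i * tutte i * tutte j * (2 * i + 1) : ℕ) : ℝ) / (tutte (i + j) : ℝ)
    = alpha i * (((i + j : ℕ) : ℝ) / (j : ℝ)) ^ ((5 : ℝ) / 2) *
        (A (i + j) j * V (i + j) j * W (i + j) j) := by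
  have hfac : ∀ m : ℕ, ((m ! : ℕ) : ℝ) ≠ 0 := fun m => by
    exact_mod_cast (Nat.factorial_pos m).ne'
  have halg : ((Nat.choose (i + j) i * tutte i * tutte j * (2 * i + 1) : ℕ) : ℝ) / (tutte (i + j) : ℝ)
      = alpha i * ((256 / 27 : ℝ) ^ i *
        ((((i + j)! : ℝ) * ((4 * j + 1)! : ℝ) * ((3 * (i + j) + 3)! : ℝ)) /
          ((j ! : ℝ) * ((3 * j + 3)! : ℝ) * ((4 * (i + j) + 1)! : ℝ)))) := by
    have hch : (Nat.choose (i + j) i : ℝ) = ((i + j)! : ℝ) / ((i ! : ℝ) * (j ! : ℝ)) := by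
      rw [Nat.cast_choose ℝ (Nat.le_add_right i j), Nat.add_sub_cancel_left]
    rw [Nat.cast_mul, Nat.cast_mul, Nat.cast_mul, hch, tutte_cast i, tutte_cast j,
      tutte_cast (i + j), alpha_eq]
    have hg : ((256 : ℝ) / 27) ^ i ≠ 0 := by positivity
    have h2i : (0:ℝ) < 2 * (i:ℝ) + 1 := by positivity
    push_cast
    field_simp
  rw [halg, key2 i j hj]
  have h1 : (256 / 27 : ℝ) ^ i * (27 / 256 : ℝ) ^ i = 1 := by
    rw [← mul_pow]; norm_num
  linear_combination (alpha i * ((((i + j : ℕ) : ℝ)) / (j : ℝ)) ^ ((5 : ℝ) / 2) *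
    (A (i + j) j * V (i + j) j * W (i + j) j)) * h1

end DenseFrac

open DenseFrac in
/-- With `t_k^j := C(k,i)·t_i·t_j·(2i+1)` (the number of `j`-dense triangulations,
`i + j = k`, `k/2 < j < k`), one has `t_k^j / t_k = (1 + o_k(1)) · α_i · (k/j)^(5/2)`,
uniformly in `j` in the stated range. -/
theorem dense_fraction_asymptotics :
    ∀ ε : ℝ, 0 < ε → ∃ K : ℕ, ∀ k : ℕ, K ≤ k → ∀ i j : ℕ,
      i + j = k → k < 2 * j → j < k →
      |((Nat.choose k i * tutte i * tutte j * (2 * i + 1) : ℕ) : ℝ) / (tutte k : ℝ) -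
          alpha i * ((k : ℝ) / (j : ℝ)) ^ ((5 : ℝ) / 2)| ≤
        ε * (alpha i * ((k : ℝ) / (j : ℝ)) ^ ((5 : ℝ) / 2)) := by
  intro ε hε
  set S : Set (ℕ × ℕ) := {p : ℕ × ℕ | p.1 < 2 * p.2 ∧ p.2 < p.1} with hSdef
  set L : Filter (ℕ × ℕ) := atTop.comap Prod.fst ⊓ 𝓟 S with hLdef
  have h1 : Tendsto (fun p : ℕ × ℕ => p.1) L atTop := tendsto_comap.mono_left inf_le_left
  have hS' : ∀ᶠ p : ℕ × ℕ in L, p.1 < 2 * p.2 :=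
    eventually_inf_principal.mpr (Eventually.of_forall fun p hp => hp.1)
  have h2 : Tendsto (fun p : ℕ × ℕ => p.2) L atTop := by
    rw [tendsto_atTop]
    intro b
    have hb : ∀ᶠ p : ℕ × ℕ in L, 2 * b ≤ p.1 := h1.eventually (eventually_ge_atTop (2 * b))
    filter_upwards [hb, hS'] with p hpb hps
    omega
  have hsq := Stirling.tendsto_stirlingSeq_sqrt_pi
  have hπ : (0:ℝ) < Real.sqrt π := Real.sqrt_pos.mpr Real.pi_pos
  have hqe := tendsto_q
  have hepos : (0:ℝ) < Real.exp 1 := Real.exp_pos 1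
  have m1 : Tendsto (fun p : ℕ × ℕ => 4 * p.2 + 1) L atTop :=
    tendsto_atTop_mono (fun p => by omega) h2
  have m2 : Tendsto (fun p : ℕ × ℕ => 3 * p.1 + 3) L atTop :=
    tendsto_atTop_mono (fun p => by omega) h1
  have m3 : Tendsto (fun p : ℕ × ℕ => 3 * p.2 + 3) L atTop :=
    tendsto_atTop_mono (fun p => by omega) h2
  have m4 : Tendsto (fun p : ℕ × ℕ => 4 * p.1 + 1) L atTop :=
    tendsto_atTop_mono (fun p => by omega) h1
  have m5 : Tendsto (fun p : ℕ × ℕ => 4 * p.2) L atTop :=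
    tendsto_atTop_mono (fun p => by omega) h2
  have m6 : Tendsto (fun p : ℕ × ℕ => 4 * p.1) L atTop :=
    tendsto_atTop_mono (fun p => by omega) h1
  have hA : Tendsto (fun p : ℕ × ℕ => A p.1 p.2) L (𝓝 1) := by
    have hlim := (((hsq.comp h1).mul (hsq.comp m1)).mul (hsq.comp m2)).div
      (((hsq.comp h2).mul (hsq.comp m3)).mul (hsq.comp m4))
      (by positivity : (Real.sqrt π * Real.sqrt π * Real.sqrt π) ≠ 0)
    rw [div_self (by positivity : (Real.sqrt π * Real.sqrt π * Real.sqrt π) ≠ 0)] at hlim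
    exact hlim.congr fun p => by simp [A, Function.comp]
  have hV : Tendsto (fun p : ℕ × ℕ => V p.1 p.2) L (𝓝 1) := by
    have hlim := ((hqe.comp m5).mul ((hqe.comp h1).pow 3)).div
      (((hqe.comp h2).pow 3).mul (hqe.comp m6))
      (by positivity : (Real.exp 1 ^ 3 * Real.exp 1) ≠ 0)
    rw [show Real.exp 1 * Real.exp 1 ^ 3 / (Real.exp 1 ^ 3 * Real.exp 1) = 1 by
      rw [mul_comm]; exact div_self (by positivity)] at hlim
    exact hlim.congr fun p => by simp [V, Function.comp]
  have w1 : Tendsto (fun n : ℕ => (4 * (n:ℝ) + 1) / (4 * (n:ℝ) + 4)) atTop (𝓝 1) := by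
    have hden : Tendsto (fun n : ℕ => 4 * (n:ℝ) + 4) atTop atTop := by
      apply tendsto_atTop_add_const_right
      exact (tendsto_natCast_atTop_atTop (R := ℝ)).const_mul_atTop (by norm_num)
    have h0 : Tendsto (fun n : ℕ => (3:ℝ) / (4 * (n:ℝ) + 4)) atTop (𝓝 0) :=
      Tendsto.div_atTop tendsto_const_nhds hden
    have hlim := (tendsto_const_nhds (x := (1:ℝ)) (f := atTop (α := ℕ))).sub h0
    rw [sub_zero] at hlim
    apply hlim.congr
    intro n
    have hne : (4 * (n:ℝ) + 4) ≠ 0 := by positivity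
    field_simp
    ring
  have w2 : Tendsto (fun n : ℕ => (4 * (n:ℝ) + 4) / (4 * (n:ℝ) + 1)) atTop (𝓝 1) := by
    have hden : Tendsto (fun n : ℕ => 4 * (n:ℝ) + 1) atTop atTop := by
      apply tendsto_atTop_add_const_right
      exact (tendsto_natCast_atTop_atTop (R := ℝ)).const_mul_atTop (by norm_num)
    have h0 : Tendsto (fun n : ℕ => (3:ℝ) / (4 * (n:ℝ) + 1)) atTop (𝓝 0) :=
      Tendsto.div_atTop tendsto_const_nhds hden
    have hlim := (tendsto_const_nhds (x := (1:ℝ)) (f := atTop (α := ℕ))).add h0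
    rw [add_zero] at hlim
    apply hlim.congr
    intro n
    have hne : (4 * (n:ℝ) + 1) ≠ 0 := by positivity
    field_simp
    ring
  have hWin : Tendsto (fun p : ℕ × ℕ =>
      (4 * (p.2:ℝ) + 1) * ((p.1:ℝ) + 1) / (((p.2:ℝ) + 1) * (4 * (p.1:ℝ) + 1))) L (𝓝 1) := by
    have hlim := (w1.comp h2).mul (w2.comp h1)
    rw [mul_one] at hlim
    apply hlim.congr
    intro p
    simp only [Function.comp]
    have hne1 : (4 * (p.2:ℝ) + 4) ≠ 0 := by positivity
    have hne2 : (4 * (p.1:ℝ) + 1) ≠ 0 := by positivity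
    have hne3 : ((p.2:ℝ) + 1) ≠ 0 := by positivity
    field_simp
  have hW : Tendsto (fun p : ℕ × ℕ => W p.1 p.2) L (𝓝 1) := by
    have hlim := hWin.sqrt
    rw [Real.sqrt_one] at hlim
    exact hlim.congr fun p => by simp [W]
  have hAVW : Tendsto (fun p : ℕ × ℕ => A p.1 p.2 * V p.1 p.2 * W p.1 p.2) L (𝓝 1) := by
    have := (hA.mul hV).mul hW
    simpa using this
  have hev : ∀ᶠ p : ℕ × ℕ in L, |A p.1 p.2 * V p.1 p.2 * W p.1 p.2 - 1| ≤ ε := by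
    have := Metric.tendsto_nhds.mp hAVW ε hε
    exact this.mono fun p hp => by rw [Real.dist_eq] at hp; exact hp.le
  rw [hLdef, eventually_inf_principal, eventually_comap, eventually_atTop] at hev
  obtain ⟨K, hK⟩ := hev
  refine ⟨K, ?_⟩
  intro k hKk i j hij h2j hjk
  have hj1 : 1 ≤ j := by omega
  subst hij
  have habs := hK (i + j) hKk (i + j, j) rfl ⟨h2j, hjk⟩
  rw [main_identity i j hj1]
  have hjR : (0:ℝ) < (j:ℝ) := by exact_mod_cast hj1
  have hkR : (0:ℝ) < ((i + j : ℕ):ℝ) := by exact_mod_cast (by omega : 1 ≤ i + j)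
  have hTpos : 0 < alpha i * (((i + j : ℕ) : ℝ) / (j : ℝ)) ^ ((5 : ℝ) / 2) :=
    mul_pos (alpha_pos i) (Real.rpow_pos_of_pos (div_pos hkR hjR) _)
  set T := alpha i * (((i + j : ℕ) : ℝ) / (j : ℝ)) ^ ((5 : ℝ) / 2) with hT
  calc |T * (A (i + j) j * V (i + j) j * W (i + j) j) - T|
      = T * |A (i + j) j * V (i + j) j * W (i + j) j - 1| := by
        rw [show T * (A (i + j) j * V (i + j) j * W (i + j) j) - T
          = T * (A (i + j) j * V (i + j) j * W (i + j) j - 1) by ring, abs_mul,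
          abs_of_pos hTpos]
    _ ≤ T * ε := mul_le_mul_of_nonneg_left habs hTpos.le
    _ = ε * T := mul_comm _ _
end
end

section
/- With α_i := (6(2i+1)/((3i+3)(3i+2))) · C(4i+1,i) · γ^{−i} and γ = 256/27, for all i ≥ 1, α_i ≤ (16√2)/(9√(3π)) · i^{−3/2}. -/
noncomputable section

open Filter Real Stirling Nat Topology

lemma alpha_pos (i : ℕ) : 0 < alpha i := by
  have h : 0 < ((4 * i + 1).choose i : ℝ) := by
    exact_mod_cast Nat.choose_pos (by omega)
  unfold alpha
  positivity

lemma stirl_pos {n : ℕ} (hn : 1 ≤ n) : 0 < stirlingSeq n := by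
  obtain ⟨m, rfl⟩ := Nat.exists_eq_add_of_le hn
  simpa [Nat.add_comm] using stirlingSeq'_pos m

lemma fact_eq (n : ℕ) (hn : 1 ≤ n) :
    (n ! : ℝ) = stirlingSeq n * (Real.sqrt (2 * n) * ((n : ℝ) / Real.exp 1) ^ n) := by
  have hd : (Real.sqrt (2 * n) * ((n : ℝ) / Real.exp 1) ^ n) ≠ 0 := by
    have : (0:ℝ) < n := by exact_mod_cast hn
    positivity
  rw [stirlingSeq, div_mul_cancel₀ _ hd]

lemma choose_cast (i : ℕ) :
    ((4 * i + 1).choose i : ℝ) = ((4 * i + 1)! : ℝ) / ((i ! : ℝ) * ((3 * i + 1)! : ℝ)) := by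
  have h := Nat.cast_choose ℝ (show i ≤ 4 * i + 1 by omega)
  rwa [show 4 * i + 1 - i = 3 * i + 1 by omega] at h

lemma fact_shift3 (n : ℕ) : ((n + 3)! : ℕ) = (n+3)*(n+2)*(n+1)*n ! := by
  simp [Nat.factorial_succ]; ring

lemma fact_shift (n : ℕ) : ((n + 4)! : ℕ) = (n+4)*(n+3)*(n+2)*(n+1)*n ! := by
  simp [Nat.factorial_succ]; ring

lemma alpha_ratio (i : ℕ) :
    alpha (i + 1) * (32 * (((i:ℝ)+2)*(3*(i:ℝ)+5)*(3*(i:ℝ)+4))) =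
      alpha i * (9 * ((2*(i:ℝ)+3)*(4*(i:ℝ)+3)*(4*(i:ℝ)+5))) := by
  have h1 := choose_cast i
  have h2 : ((4 * (i+1) + 1).choose (i+1) : ℝ)
      = ((4 * i + 5)! : ℝ) / (((i+1)! : ℝ) * ((3 * i + 4)! : ℝ)) := by
    have h := Nat.cast_choose ℝ (show i + 1 ≤ 4 * (i+1) + 1 by omega)
    rwa [show 4 * (i+1) + 1 - (i+1) = 3 * i + 4 by omega,
      show 4 * (i+1) + 1 = 4 * i + 5 by omega] at h
  have e5 : ((4 * i + 5)! : ℝ)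
      = (4*(i:ℝ)+5)*(4*(i:ℝ)+4)*(4*(i:ℝ)+3)*(4*(i:ℝ)+2)*((4*i+1)! : ℝ) := by
    have := fact_shift (4*i+1)
    rw [show 4*i+1+4 = 4*i+5 by omega] at this
    exact_mod_cast congrArg (Nat.cast (R := ℝ)) this
  have e3 : ((3 * i + 4)! : ℝ) = (3*(i:ℝ)+4)*(3*(i:ℝ)+3)*(3*(i:ℝ)+2)*((3*i+1)! : ℝ) := by
    have h := fact_shift3 (3*i+1)
    rw [show 3*i+1+3 = 3*i+4 by omega] at h
    exact_mod_cast congrArg (Nat.cast (R := ℝ)) h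
  have e1 : (((i+1))! : ℝ) = ((i:ℝ)+1) * (i ! : ℝ) := by
    exact_mod_cast congrArg (Nat.cast (R := ℝ)) (Nat.factorial_succ i)
  have hfi : ((i)! : ℝ) ≠ 0 := by positivity
  have hf3 : (((3*i+1))! : ℝ) ≠ 0 := by positivity
  have hg : ((256:ℝ)/27) ^ i ≠ 0 := by positivity
  have hx0 : (0:ℝ) ≤ (i:ℝ) := Nat.cast_nonneg i
  unfold alpha
  rw [h1, h2, e5, e3, e1, pow_succ]
  push_cast
  field_simp
  ring

lemma rpow_three_halves {x : ℝ} (hx : 0 ≤ x) : x ^ ((3:ℝ)/2) = Real.sqrt (x^3) := by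
  rw [Real.sqrt_eq_rpow, ← Real.rpow_natCast x 3, ← Real.rpow_mul hx]
  norm_num

lemma beta_step (i : ℕ) (hi : 1 ≤ i) :
    alpha i * Real.sqrt ((i:ℝ)^3) ≤ alpha (i+1) * Real.sqrt (((i:ℝ)+1)^3) := by
  set x : ℝ := (i:ℝ) with hxdef
  have hx0 : (0:ℝ) ≤ x := Nat.cast_nonneg i
  have hD : (0:ℝ) < 32*((x+2)*(3*x+5)*(3*x+4)) := by positivity
  have halpha : alpha (i+1) = alpha i * (9 * ((2*x+3)*(4*x+3)*(4*x+5))) /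
      (32*((x+2)*(3*x+5)*(3*x+4))) := by
    field_simp
    linarith [alpha_ratio i]
  rw [halpha]
  have hap := alpha_pos i
  set r : ℝ := 9 * ((2*x+3)*(4*x+3)*(4*x+5)) / (32*((x+2)*(3*x+5)*(3*x+4))) with hr
  have hr0 : 0 ≤ r := by positivity
  have key : x^3 ≤ r^2 * (x+1)^3 := by
    rw [hr, div_pow, div_mul_eq_mul_div, le_div_iff₀ (by positivity)]
    have expand : (9 * ((2*x+3)*(4*x+3)*(4*x+5)))^2 * (x+1)^3
        - x^3 * (32*((x+2)*(3*x+5)*(3*x+4)))^2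
        = 164025 + 1410615*x + 5350131*x^2 + 10107977*x^3 + 10391288*x^4
          + 5955236*x^5 + 1794816*x^6 + 222336*x^7 := by ring
    nlinarith [pow_nonneg hx0 2, pow_nonneg hx0 3, pow_nonneg hx0 4,
      pow_nonneg hx0 5, pow_nonneg hx0 6, pow_nonneg hx0 7]
  calc alpha i * Real.sqrt (x^3) ≤ alpha i * Real.sqrt (r^2 * (x+1)^3) := by
        exact mul_le_mul_of_nonneg_left (Real.sqrt_le_sqrt key) hap.le
    _ = alpha i * r * Real.sqrt ((x+1)^3) := by
        rw [Real.sqrt_mul (sq_nonneg r), Real.sqrt_sq hr0, mul_assoc]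
    _ = alpha i * (9 * ((2*x+3)*(4*x+3)*(4*x+5))) /
      (32*((x+2)*(3*x+5)*(3*x+4))) * Real.sqrt ((x+1)^3) := by
        rw [hr]; ring

lemma beta_decomp (i : ℕ) (hi : 1 ≤ i) :
    alpha i * (i:ℝ) ^ ((3:ℝ)/2)
      = (6*(2*(i:ℝ)+1)*(i:ℝ)*(4*(i:ℝ)+1)/((3*(i:ℝ)+3)*(3*(i:ℝ)+2)*(3*(i:ℝ)+1)))
        * Real.sqrt ((4*(i:ℝ)+1)/(6*(i:ℝ)+2))
        * (stirlingSeq (4*i+1) / (stirlingSeq i * stirlingSeq (3*i+1)))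
        * (27*(4*(i:ℝ)+1)^4/(256*(i:ℝ)*(3*(i:ℝ)+1)^3))^i := by
  set x : ℝ := (i:ℝ) with hxdef
  have hx1 : (1:ℝ) ≤ x := by rw [hxdef]; exact_mod_cast hi
  have hxpos : (0:ℝ) < x := by linarith
  have hA : (0:ℝ) < 4*x+1 := by linarith
  have hB : (0:ℝ) < 3*x+1 := by linarith
  have hfA := fact_eq (4*i+1) (by omega)
  have hfI := fact_eq i hi
  have hfB := fact_eq (3*i+1) (by omega)
  have hcA : ((4*i+1 : ℕ) : ℝ) = 4*x+1 := by push_cast; ring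
  have hcB : ((3*i+1 : ℕ) : ℝ) = 3*x+1 := by push_cast; ring
  rw [hcA] at hfA
  rw [hcB] at hfB
  have hsA : Real.sqrt (2*(4*x+1)) = Real.sqrt 2 * Real.sqrt (4*x+1) :=
    Real.sqrt_mul (by norm_num) _
  have hsI : Real.sqrt (2*x) = Real.sqrt 2 * Real.sqrt x :=
    Real.sqrt_mul (by norm_num) _
  have hsB : Real.sqrt (2*(3*x+1)) = Real.sqrt 2 * Real.sqrt (3*x+1) :=
    Real.sqrt_mul (by norm_num) _
  rw [hsA] at hfA; rw [hsI] at hfI; rw [hsB] at hfB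
  have hsR : Real.sqrt ((4*x+1)/(6*x+2))
      = Real.sqrt (4*x+1) / (Real.sqrt 2 * Real.sqrt (3*x+1)) := by
    rw [show (6*x+2) = 2*(3*x+1) by ring, Real.sqrt_div hA.le, hsB]
  have hx32 : x ^ ((3:ℝ)/2) = x * Real.sqrt x := by
    rw [show (3:ℝ)/2 = 1 + 1/2 by norm_num, Real.rpow_add hxpos, Real.rpow_one,
      Real.sqrt_eq_rpow]
  -- power rewrites
  have e4 : ∀ a : ℝ, a^(4*i+1) = (a^4)^i * a := fun a => by
    rw [pow_add, pow_mul, pow_one]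
  have e3 : ∀ a : ℝ, a^(3*i+1) = (a^3)^i * a := fun a => by
    rw [pow_add, pow_mul, pow_one]
  have hE : ((Real.exp 1)^4)^i = (Real.exp 1)^i * ((Real.exp 1)^3)^i := by
    rw [← mul_pow]; ring_nf
  -- nonvanishing
  have hstA : stirlingSeq (4*i+1) ≠ 0 := (stirl_pos (by omega)).ne'
  have hstI : stirlingSeq i ≠ 0 := (stirl_pos hi).ne'
  have hstB : stirlingSeq (3*i+1) ≠ 0 := (stirl_pos (by omega)).ne'
  have hs2 : Real.sqrt 2 ≠ 0 := by positivity
  have hsx : Real.sqrt x ≠ 0 := by positivity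
  have hsb : Real.sqrt (3*x+1) ≠ 0 := by positivity
  have hsa : Real.sqrt (4*x+1) ≠ 0 := by positivity
  have hexp : Real.exp 1 ≠ 0 := (Real.exp_pos 1).ne'
  have hexpi : (Real.exp 1)^i ≠ 0 := pow_ne_zero _ hexp
  have hexp3i : ((Real.exp 1)^3)^i ≠ 0 := pow_ne_zero _ (pow_ne_zero _ hexp)
  have hxi : x^i ≠ 0 := pow_ne_zero _ hxpos.ne'
  have h27 : (27:ℝ)^i ≠ 0 := by positivity
  have h256 : (256:ℝ)^i ≠ 0 := by positivity
  have hAi : ((4*x+1)^4)^i ≠ 0 := by positivity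
  have hBi : ((3*x+1)^3)^i ≠ 0 := by positivity
  unfold alpha
  rw [choose_cast, hfA, hfI, hfB, hx32, hsR, ← hxdef]
  rw [div_pow ((4*x+1)) _ (4*i+1), div_pow x _ i, div_pow ((3*x+1)) _ (3*i+1),
    e4 (4*x+1), e3 (3*x+1), e4 (Real.exp 1), e3 (Real.exp 1), hE,
    div_pow (27*(4*x+1)^4), div_pow (256:ℝ) 27 i, mul_pow (27:ℝ), mul_pow ((256:ℝ)*x)]
  rw [mul_pow (256:ℝ) x]
  field_simp

lemma tendsto_linear_ratio (a b c d : ℝ) (hc : 0 < c) (hd : 0 ≤ d) :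
    Tendsto (fun n : ℕ => (a*(n:ℝ)+b)/(c*(n:ℝ)+d)) atTop (𝓝 (a/c)) := by
  have h1 : Tendsto (fun n : ℕ => a + b*(1/(n:ℝ))) atTop (𝓝 a) := by
    have := (tendsto_one_div_atTop_nhds_zero_nat).const_mul b
    simpa using tendsto_const_nhds.add this
  have h2 : Tendsto (fun n : ℕ => c + d*(1/(n:ℝ))) atTop (𝓝 c) := by
    have := (tendsto_one_div_atTop_nhds_zero_nat).const_mul d
    simpa using tendsto_const_nhds.add this
  have h := h1.div h2 hc.ne'
  apply h.congr'
  filter_upwards [eventually_ge_atTop 1] with n hn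
  have hx : (0:ℝ) < (n:ℝ) := by exact_mod_cast hn
  have hden : c*(n:ℝ)+d ≠ 0 := by positivity
  simp only [Pi.div_apply]
  field_simp

lemma tendsto_nat_mul_add (a b : ℕ) (ha : 1 ≤ a) :
    Tendsto (fun n : ℕ => a*n+b) atTop atTop :=
  tendsto_atTop_mono (fun n => by
    show id n ≤ a*n+b
    simp only [id_eq]
    have := Nat.mul_le_mul_right n ha
    omega) tendsto_id

lemma tendsto_S :
    Tendsto (fun i : ℕ => stirlingSeq (4*i+1) / (stirlingSeq i * stirlingSeq (3*i+1)))
      atTop (𝓝 (Real.sqrt π / (Real.sqrt π * Real.sqrt π))) := by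
  have hA := tendsto_stirlingSeq_sqrt_pi.comp (tendsto_nat_mul_add 4 1 (by norm_num))
  have hB := tendsto_stirlingSeq_sqrt_pi.comp (tendsto_nat_mul_add 3 1 (by norm_num))
  have hI := tendsto_stirlingSeq_sqrt_pi
  have hpi : Real.sqrt π * Real.sqrt π ≠ 0 := by positivity
  exact hA.div (hI.mul hB) hpi

lemma tendsto_U :
    Tendsto (fun i : ℕ => (27*(4*(i:ℝ)+1)^4/(256*(i:ℝ)*(3*(i:ℝ)+1)^3))^i)
      atTop (𝓝 1) := by
  -- squeeze between 1 and exp((491/6912) * (1/i))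
  have hup : Tendsto (fun i : ℕ => Real.exp ((491/6912) * (1/(i:ℝ)))) atTop (𝓝 1) := by
    have h0 : Tendsto (fun i : ℕ => (491/6912) * (1/(i:ℝ))) atTop (𝓝 0) := by
      simpa using tendsto_one_div_atTop_nhds_zero_nat.const_mul (491/6912 : ℝ)
    simpa [Function.comp_def] using (Real.continuous_exp.tendsto 0).comp h0
  apply tendsto_of_tendsto_of_tendsto_of_le_of_le' tendsto_const_nhds hup
  · filter_upwards [eventually_ge_atTop 1] with i hi
    have hx1 : (1:ℝ) ≤ (i:ℝ) := by exact_mod_cast hi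
    have hu1 : (1:ℝ) ≤ 27*(4*(i:ℝ)+1)^4/(256*(i:ℝ)*(3*(i:ℝ)+1)^3) := by
      rw [le_div_iff₀ (by positivity)]
      nlinarith [sq_nonneg ((i:ℝ))]
    exact one_le_pow₀ hu1
  · filter_upwards [eventually_ge_atTop 1] with i hi
    have hx1 : (1:ℝ) ≤ (i:ℝ) := by exact_mod_cast hi
    set x : ℝ := (i:ℝ)
    have hxpos : (0:ℝ) < x := by linarith
    set u : ℝ := 27*(4*x+1)^4/(256*x*(3*x+1)^3) with hu
    have hu1 : (1:ℝ) ≤ u := by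
      rw [hu, le_div_iff₀ (by positivity)]
      nlinarith [sq_nonneg x]
    have hle : u ≤ Real.exp (u - 1) := by
      have := Real.add_one_le_exp (u - 1)
      linarith
    have hui : u^i ≤ Real.exp (u-1)^i := pow_le_pow_left₀ (by linarith) hle i
    have hexp : Real.exp (u-1)^i = Real.exp ((i:ℝ)*(u-1)) := (Real.exp_nat_mul _ i).symm
    have hkey : (i:ℝ)*(u-1) ≤ (491/6912) * (1/x) := by
      have humx : u - 1 = (288*x^2+176*x+27)/(256*x*(3*x+1)^3) := by
        rw [hu]; field_simp; ring
      rw [humx, ← mul_div_assoc,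
        show (491:ℝ)/6912 * (1/x) = 491/(6912*x) by field_simp,
        div_le_div_iff₀ (by positivity) (by positivity),
        show ((i:ℝ)) = x from rfl]
      nlinarith [pow_nonneg hxpos.le 4, pow_nonneg hxpos.le 3, pow_nonneg hxpos.le 2, hxpos.le]
    calc u^i ≤ Real.exp ((i:ℝ)*(u-1)) := by rw [← hexp]; exact hui
      _ ≤ Real.exp ((491/6912) * (1/x)) := Real.exp_le_exp.mpr hkey

lemma tendsto_beta :
    Tendsto (fun i : ℕ => alpha i * (i:ℝ) ^ ((3:ℝ)/2)) atTop
      (𝓝 (16 * Real.sqrt 2 / (9 * Real.sqrt (3 * π)))) := by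
  have h1 := tendsto_linear_ratio 2 1 3 3 (by norm_num) (by norm_num)
  have h2 := tendsto_linear_ratio 1 0 3 2 (by norm_num) (by norm_num)
  have h3 := tendsto_linear_ratio 4 1 3 1 (by norm_num) (by norm_num)
  have hQ0 := ((h1.mul h2).mul h3).const_mul (6:ℝ)
  have hQ : Tendsto (fun i : ℕ =>
      6*(2*(i:ℝ)+1)*(i:ℝ)*(4*(i:ℝ)+1)/((3*(i:ℝ)+3)*(3*(i:ℝ)+2)*(3*(i:ℝ)+1)))
      atTop (𝓝 (6*(2/3*(1/3)*(4/3)))) := by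
    apply hQ0.congr'
    filter_upwards [eventually_ge_atTop 1] with n hn
    have hx1 : (1:ℝ) ≤ (n:ℝ) := by exact_mod_cast hn
    have d1 : (3*(n:ℝ)+3) ≠ 0 := by positivity
    have d2 : (3*(n:ℝ)+2) ≠ 0 := by positivity
    have d3 : (3*(n:ℝ)+1) ≠ 0 := by positivity
    field_simp
    ring
  have hsq0 := tendsto_linear_ratio 4 1 6 2 (by norm_num) (by norm_num)
  have hsq : Tendsto (fun i : ℕ => Real.sqrt ((4*(i:ℝ)+1)/(6*(i:ℝ)+2))) atTop
      (𝓝 (Real.sqrt (4/6))) := (Real.continuous_sqrt.tendsto (4/6)).comp hsq0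
  have htot := ((hQ.mul hsq).mul tendsto_S).mul tendsto_U
  have hval : (6*(2/3*(1/3)*(4/3)) * Real.sqrt (4/6) *
      (Real.sqrt π / (Real.sqrt π * Real.sqrt π)) * 1)
      = 16 * Real.sqrt 2 / (9 * Real.sqrt (3 * π)) := by
    rw [show (4:ℝ)/6 = 2/3 by norm_num,
      Real.sqrt_div (by norm_num : (0:ℝ) ≤ 2) 3,
      Real.sqrt_mul (by norm_num : (0:ℝ) ≤ 3)]
    have hpi : Real.sqrt π ≠ 0 := by positivity
    have h3 : Real.sqrt 3 ≠ 0 := by positivity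
    have hpp : Real.sqrt π * Real.sqrt π = π := Real.mul_self_sqrt Real.pi_pos.le
    field_simp
    ring
  rw [hval] at htot
  apply htot.congr'
  filter_upwards [eventually_ge_atTop 1] with n hn
  exact (beta_decomp n hn).symm

/-- For all `i ≥ 1`, `α_i ≤ (16√2)/(9√(3π)) · i^(−3/2)`. -/
theorem alpha_bound (i : ℕ) (hi : 1 ≤ i) :
    alpha i ≤ 16 * Real.sqrt 2 / (9 * Real.sqrt (3 * Real.pi)) *
      (i : ℝ) ^ (-(3 : ℝ) / 2) := by
  set L : ℝ := 16 * Real.sqrt 2 / (9 * Real.sqrt (3 * Real.pi)) with hL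
  -- the shifted beta sequence
  set b : ℕ → ℝ := fun n => alpha (n+1) * (((n:ℝ)+1)) ^ ((3:ℝ)/2) with hb
  have hmono : Monotone b := by
    apply monotone_nat_of_le_succ
    intro n
    have hstep := beta_step (n+1) (by omega)
    have hc1 : ((n+1 : ℕ) : ℝ) = (n:ℝ)+1 := by push_cast; ring
    have h32 : ∀ y : ℝ, 0 ≤ y → y ^ ((3:ℝ)/2) = Real.sqrt (y^3) :=
      fun y hy => rpow_three_halves hy
    simp only [hb]
    rw [hc1, h32 ((n:ℝ)+1) (by positivity), h32 ((n:ℝ)+1+1) (by positivity)]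
    rw [hc1] at hstep
    convert hstep using 4 <;> push_cast <;> ring
  have htend : Tendsto b atTop (𝓝 L) := by
    have := tendsto_beta.comp (tendsto_add_atTop_nat 1)
    apply this.congr
    intro n
    simp only [Function.comp, hb]
    push_cast
    ring_nf
  have hle : b (i-1) ≤ L := hmono.ge_of_tendsto htend (i-1)
  have hi1 : i - 1 + 1 = i := by omega
  rw [hb] at hle
  simp only [hi1] at hle
  have hcast : ((i-1 : ℕ) : ℝ) + 1 = (i:ℝ) := by
    have : ((i-1 : ℕ) : ℝ) = (i:ℝ) - 1 := by
      push_cast [Nat.cast_sub hi]; ring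
    rw [this]; ring
  rw [hcast] at hle
  -- convert goal
  have hxpos : (0:ℝ) < (i:ℝ) := by exact_mod_cast hi
  have hrp : ((i:ℝ)) ^ (-(3:ℝ)/2) = (((i:ℝ)) ^ ((3:ℝ)/2))⁻¹ := by
    rw [show (-(3:ℝ)/2) = -((3:ℝ)/2) by ring, Real.rpow_neg hxpos.le]
  rw [hrp, ← div_eq_mul_inv, le_div_iff₀ (Real.rpow_pos_of_pos hxpos _)]
  exact hle
end
end

section
/- The interiors of any two missing faces of a triangulation of [123] are either disjoint or one contains the other; hence for j > k/2 a triangulation with k internal vertices has at most one missing face of density j. -/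
open Finset

noncomputable section

/-- `F` is (the face set of) a triangulation of the triangle `[123]`, with internal
vertex set `V`, realized geometrically by the vertex placement `pos` : the corners are
fixed, triangles are nondegenerate, internal vertices lie strictly inside the big
triangle, the triangles cover the big triangle, and any two triangles meet in a common
(possibly empty) face. -/
def IsTriangulationWith (pos : ℕ → ℝ × ℝ) (V : Finset ℕ) (F : Finset (Finset ℕ)) : Prop :=
  pos 1 = ((0 : ℝ), (0 : ℝ)) ∧ pos 2 = ((1 : ℝ), (0 : ℝ)) ∧ pos 3 = ((0 : ℝ), (1 : ℝ)) ∧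
  Disjoint V ({1, 2, 3} : Finset ℕ) ∧
  Set.InjOn pos ↑(V ∪ {1, 2, 3}) ∧
  (∀ f ∈ F, f.card = 3 ∧ f ⊆ V ∪ {1, 2, 3} ∧
    AffineIndependent ℝ (fun v : f => pos ↑v)) ∧
  (∀ v ∈ V, ∃ f ∈ F, v ∈ f) ∧
  (∀ v ∈ V, pos v ∈
    interior (convexHull ℝ ({((0 : ℝ), (0 : ℝ)), (1, 0), (0, 1)} : Set (ℝ × ℝ)))) ∧
  (⋃ f ∈ F, convexHull ℝ (pos '' ↑f)) =
    convexHull ℝ ({((0 : ℝ), (0 : ℝ)), (1, 0), (0, 1)} : Set (ℝ × ℝ)) ∧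
  (∀ f ∈ F, ∀ g ∈ F,
    convexHull ℝ (pos '' ↑f) ∩ convexHull ℝ (pos '' ↑g) = convexHull ℝ (pos '' ↑(f ∩ g)))

/-- `F` is a triangulation of the triangle `[123]` with internal vertex set `V`. -/
def IsTriangulation (V : Finset ℕ) (F : Finset (Finset ℕ)) : Prop :=
  ∃ pos : ℕ → ℝ × ℝ, IsTriangulationWith pos V F

/-- A missing face of the triangulation with face set `F`: a triple of vertices, other
than `{1,2,3}`, spanning a triangle in the 1-skeleton but not a face of `F`. -/
def IsMissingFace (F : Finset (Finset ℕ)) (m : Finset ℕ) : Prop :=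
  m.card = 3 ∧ m ≠ ({1, 2, 3} : Finset ℕ) ∧ m ∉ F ∧
    ∀ e ⊆ m, e.card = 2 → ∃ f ∈ F, e ⊆ f

/-- The density of a triple `m`: the number of (internal) vertices of `V` lying strictly
inside the triangle spanned by `m` in the geometric realization `pos`. -/
def densityOf (pos : ℕ → ℝ × ℝ) (V : Finset ℕ) (m : Finset ℕ) : ℕ :=
  {v ∈ (V : Set ℕ) | pos v ∈ interior (convexHull ℝ (pos '' ↑m))}.ncard


open Set

namespace MFAux

set_option linter.unusedSectionVars false

local notation "E" => (ℝ × ℝ)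

variable {ι : Type} [Fintype ι]

theorem mem_closure_interior {s : Set E} (hs : Convex ℝ s) {y : E} (hy : y ∈ interior s)
    {x : E} (hx : x ∈ closure s) : x ∈ closure (interior s) := by
  have hcont : Continuous (fun t : ℝ => x + t • (y - x)) := by continuity
  have htend : Filter.Tendsto (fun t : ℝ => x + t • (y - x)) (nhdsWithin 0 (Ioi 0)) (nhds x) := by
    have h0 := hcont.tendsto 0
    simp only [zero_smul, add_zero] at h0
    exact h0.mono_left nhdsWithin_le_nhds
  refine mem_closure_of_tendsto htend ?_
  filter_upwards [Ioc_mem_nhdsGT_of_mem (Set.left_mem_Ico.2 zero_lt_one)] with t ht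
  exact hs.add_smul_sub_mem_interior' hx hy ht

theorem frontier_hit {s A : Set E} (hA : IsClosed A) (hs : IsPreconnected s)
    (h1 : (s ∩ A).Nonempty) (h2 : (s \ A).Nonempty) : (s ∩ frontier A).Nonempty := by
  by_contra hempty
  rw [Set.not_nonempty_iff_eq_empty] at hempty
  have hsub : s ⊆ interior A ∪ (closure A)ᶜ := by
    intro z hz
    by_cases hzA : z ∈ interior A
    · exact Or.inl hzA
    · refine Or.inr ?_
      intro hzc
      have : z ∈ frontier A := ⟨hzc, hzA⟩
      exact absurd (show z ∈ s ∩ frontier A from ⟨hz, this⟩) (by simp [hempty])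
  have hdisj : Disjoint (interior A) (closure A)ᶜ :=
    Set.disjoint_compl_right_iff_subset.mpr interior_subset_closure
  rcases hs.subset_or_subset isOpen_interior (isClosed_closure.isOpen_compl) hdisj hsub with hc | hc
  · rcases h2 with ⟨z, hz, hzA⟩
    exact hzA (interior_subset (hc hz))
  · rcases h1 with ⟨z, hz, hzA⟩
    exact (hc hz) (subset_closure hzA)

theorem coord_nonneg_of_mem_hull (b : AffineBasis ι ℝ E) {S : Set ι} (i : ι)
    {x : E} (hx : x ∈ convexHull ℝ (b '' S)) : 0 ≤ b.coord i x := by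
  classical
  have hconv : Convex ℝ {z : E | 0 ≤ b.coord i z} := by
    have := (convex_Ici (0:ℝ)).affine_preimage (b.coord i)
    simpa [Set.preimage, Set.Ici] using this
  have hsub : b '' S ⊆ {z : E | 0 ≤ b.coord i z} := by
    rintro _ ⟨j, hj, rfl⟩
    simp only [Set.mem_setOf_eq, AffineBasis.coord_apply]
    split <;> norm_num
  exact convexHull_min hsub hconv hx

theorem coord_eq_zero_of_mem_hull (b : AffineBasis ι ℝ E) {S : Set ι} {i : ι} (hi : i ∉ S)
    {x : E} (hx : x ∈ convexHull ℝ (b '' S)) : b.coord i x = 0 := by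
  classical
  have hconv : Convex ℝ {z : E | b.coord i z = 0} := by
    have := (convex_singleton (0:ℝ)).affine_preimage (b.coord i)
    simpa [Set.preimage] using this
  have hsub : b '' S ⊆ {z : E | b.coord i z = 0} := by
    rintro _ ⟨j, hj, rfl⟩
    have : i ≠ j := fun h => hi (h ▸ hj)
    simp [AffineBasis.coord_apply, this]
  exact convexHull_min hsub hconv hx

theorem mem_hull_of_coords (b : AffineBasis ι ℝ E) {S : Set ι} {x : E}
    (h0 : ∀ i, 0 ≤ b.coord i x) (hS : ∀ i, i ∉ S → b.coord i x = 0) :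
    x ∈ convexHull ℝ (b '' S) := by
  classical
  have hsum : ∑ i, b.coord i x = 1 := b.sum_coord_apply_eq_one x
  have hx : (Finset.univ.centerMass (fun i => b.coord i x) fun i => b i) = x := by
    rw [← affineCombination_eq_centerMass hsum]
    exact b.affineCombination_coord_eq_self x
  rw [← hx, ← Finset.centerMass_filter_ne_zero (fun i => b i)]
  refine Finset.centerMass_mem_convexHull _ (fun i _ => h0 i) ?_ ?_
  · have : ∑ i ∈ ({i ∈ Finset.univ | (fun i => b.coord i x) i ≠ 0}), b.coord i x
        = ∑ i, b.coord i x := Finset.sum_filter_ne_zero _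
    rw [this, hsum]; norm_num
  · intro i hi
    simp only [Finset.mem_filter] at hi
    exact Set.mem_image_of_mem _ (by
      by_contra hiS
      exact hi.2 (hS i hiS))

end MFAux

namespace MFAux2
open MFAux

variable {ι : Type} [Fintype ι]
set_option linter.unusedSectionVars false

theorem hull_inter_hull (b : AffineBasis ι ℝ (ℝ × ℝ)) (S₁ S₂ : Set ι) :
    convexHull ℝ (b '' S₁) ∩ convexHull ℝ (b '' S₂) ⊆ convexHull ℝ (b '' (S₁ ∩ S₂)) := by
  rintro x ⟨h1, h2⟩
  refine mem_hull_of_coords b (fun i => coord_nonneg_of_mem_hull b i h1) ?_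
  intro i hi
  rcases Classical.em (i ∈ S₁) with h | h
  · exact coord_eq_zero_of_mem_hull b (fun hmem => hi ⟨h, hmem⟩) h2
  · exact coord_eq_zero_of_mem_hull b h h1

theorem mem_of_basis_mem_hull (b : AffineBasis ι ℝ (ℝ × ℝ)) {S : Set ι} {i : ι}
    (hx : b i ∈ convexHull ℝ (b '' S)) : i ∈ S := by
  by_contra hi
  have h0 := coord_eq_zero_of_mem_hull b hi hx
  have h1 : b.coord i (b i) = 1 := by classical simp [AffineBasis.coord_apply]
  rw [h0] at h1; norm_num at h1

theorem hull_disjoint_interior (b : AffineBasis ι ℝ (ℝ × ℝ)) {S : Set ι} {i : ι} (hi : i ∉ S) :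
    convexHull ℝ (b '' S) ∩ interior (convexHull ℝ (Set.range b)) = ∅ := by
  ext x
  simp only [Set.mem_inter_iff, Set.mem_empty_iff_false, iff_false, not_and]
  intro hx hint
  rw [b.interior_convexHull] at hint
  have := coord_eq_zero_of_mem_hull b hi hx
  have := hint i
  simp_all

theorem isClosed_hull (b : AffineBasis ι ℝ (ℝ × ℝ)) (S : Set ι) :
    IsClosed (convexHull ℝ (b '' S)) :=
  ((S.toFinite.image b).isCompact_convexHull ℝ).isClosed

theorem frontier_hull_subset (b : AffineBasis ι ℝ (ℝ × ℝ)) :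
    frontier (convexHull ℝ (Set.range b)) ⊆ ⋃ i, convexHull ℝ (b '' {i}ᶜ) := by
  intro x hx
  have hcl : x ∈ convexHull ℝ (Set.range b) := by
    have := hx.1
    rwa [IsClosed.closure_eq (by simpa [Set.image_univ] using isClosed_hull b Set.univ)] at this
  have hrange : Set.range b = b '' Set.univ := by simp [Set.image_univ]
  have hnotint := hx.2
  rw [b.interior_convexHull] at hnotint
  simp only [Set.mem_setOf_eq, not_forall, not_lt] at hnotint
  rcases hnotint with ⟨i, hi⟩
  have h0 : b.coord i x = 0 := le_antisymm hi
    (coord_nonneg_of_mem_hull b i (by rwa [hrange] at hcl))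
  refine Set.mem_iUnion.2 ⟨i, ?_⟩
  refine mem_hull_of_coords b
    (fun j => coord_nonneg_of_mem_hull b j (by rwa [hrange] at hcl)) ?_
  intro j hj
  simp only [Set.mem_compl_iff, Set.mem_singleton_iff, not_not] at hj
  rwa [hj]

theorem interior_hull_nonempty (b : AffineBasis ι ℝ (ℝ × ℝ)) :
    (interior (convexHull ℝ (Set.range b))).Nonempty :=
  ⟨_, b.centroid_mem_interior_convexHull⟩

end MFAux2

namespace MFTri
open MFAux MFAux2
set_option linter.unusedSectionVars false
set_option maxHeartbeats 1000000

variable (pos : ℕ → ℝ × ℝ)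

/-- hull of the positions of a finset of vertices -/
def hl (s : Finset ℕ) : Set (ℝ × ℝ) := convexHull ℝ (pos '' ↑s)

theorem finrank_plane : Module.finrank ℝ (ℝ × ℝ) = 2 := by
  simp [Module.finrank_prod]

/-- affine basis from a nondegenerate triangle -/
def fBasis (f : Finset ℕ) (hcard : f.card = 3)
    (hind : AffineIndependent ℝ (fun v : f => pos ↑v)) : AffineBasis ↥f ℝ (ℝ × ℝ) :=
  ⟨fun v : f => pos ↑v, hind, by
    rw [hind.affineSpan_eq_top_iff_card_eq_finrank_add_one, Fintype.card_coe, hcard,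
      finrank_plane]⟩

theorem fBasis_apply (f : Finset ℕ) (hcard hind) (v : ↥f) :
    fBasis pos f hcard hind v = pos ↑v := rfl

theorem fBasis_image (f : Finset ℕ) (hcard hind) {S : Finset ℕ} (hS : S ⊆ f) :
    (fBasis pos f hcard hind) '' {i : ↥f | ↑i ∈ S} = pos '' ↑S := by
  ext y
  constructor
  · rintro ⟨i, hi, rfl⟩
    exact ⟨↑i, hi, rfl⟩
  · rintro ⟨v, hv, rfl⟩
    exact ⟨⟨v, hS hv⟩, hv, rfl⟩

theorem fBasis_range (f : Finset ℕ) (hcard hind) :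
    Set.range (fBasis pos f hcard hind) = pos '' ↑f := by
  rw [← Set.image_univ]
  have : (Set.univ : Set ↥f) = {i : ↥f | ↑i ∈ f} := by ext i; simp [i.2]
  rw [this, fBasis_image pos f hcard hind (le_refl f)]

theorem hl_mono {S S' : Finset ℕ} (hS : S ⊆ S') : hl pos S ⊆ hl pos S' :=
  convexHull_mono (Set.image_mono (by exact_mod_cast hS))

theorem isClosed_hl (S : Finset ℕ) : IsClosed (hl pos S) :=
  ((S.finite_toSet.image pos).isCompact_convexHull ℝ).isClosed

theorem convex_hl (S : Finset ℕ) : Convex ℝ (hl pos S) := convex_convexHull _ _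

/-- intersection of two subhulls of one nondegenerate triangle -/
theorem hl_inter (f : Finset ℕ) (hcard : f.card = 3)
    (hind : AffineIndependent ℝ (fun v : f => pos ↑v)) {S₁ S₂ : Finset ℕ}
    (h1 : S₁ ⊆ f) (h2 : S₂ ⊆ f) : hl pos S₁ ∩ hl pos S₂ ⊆ hl pos (S₁ ∩ S₂) := by
  have key := hull_inter_hull (fBasis pos f hcard hind) {i : ↥f | ↑i ∈ S₁} {i : ↥f | ↑i ∈ S₂}
  rw [fBasis_image pos f hcard hind h1, fBasis_image pos f hcard hind h2] at key
  have hset : ({i : ↥f | ↑i ∈ S₁} ∩ {i : ↥f | ↑i ∈ S₂}) = {i : ↥f | ↑i ∈ S₁ ∩ S₂} := by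
    ext i; simp
  rw [hset, fBasis_image pos f hcard hind (Finset.inter_subset_left.trans h1)] at key
  exact key

theorem vertex_mem_of_mem_hl (f : Finset ℕ) (hcard : f.card = 3)
    (hind : AffineIndependent ℝ (fun v : f => pos ↑v)) {S : Finset ℕ} (hS : S ⊆ f)
    {v : ℕ} (hv : v ∈ f) (hmem : pos v ∈ hl pos S) : v ∈ S := by
  have key : (⟨v, hv⟩ : ↥f) ∈ {i : ↥f | ↑i ∈ S} := by
    refine mem_of_basis_mem_hull (fBasis pos f hcard hind) ?_
    rw [fBasis_image pos f hcard hind hS]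
    exact hmem
  exact key

theorem hl_disjoint_interior (f : Finset ℕ) (hcard : f.card = 3)
    (hind : AffineIndependent ℝ (fun v : f => pos ↑v)) {S : Finset ℕ} (hS : S ⊆ f)
    {i : ℕ} (hif : i ∈ f) (hiS : i ∉ S) : hl pos S ∩ interior (hl pos f) = ∅ := by
  have key := hull_disjoint_interior (fBasis pos f hcard hind)
    (S := {j : ↥f | ↑j ∈ S}) (i := ⟨i, hif⟩) (by simpa using hiS)
  rwa [fBasis_image pos f hcard hind hS, fBasis_range] at key

theorem frontier_hl_subset (f : Finset ℕ) (hcard : f.card = 3)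
    (hind : AffineIndependent ℝ (fun v : f => pos ↑v)) :
    frontier (hl pos f) ⊆ ⋃ i ∈ f, hl pos (f.erase i) := by
  intro x hx
  have key := frontier_hull_subset (fBasis pos f hcard hind)
  rw [fBasis_range] at key
  rcases Set.mem_iUnion.1 (key hx) with ⟨i, hi⟩
  have him : (fBasis pos f hcard hind) '' {(i : ↥f)}ᶜ = pos '' ↑(f.erase ↑i) := by
    have : ({(i : ↥f)}ᶜ : Set ↥f) = {j : ↥f | ↑j ∈ f.erase ↑i} := by
      ext j
      simp only [Set.mem_compl_iff, Set.mem_singleton_iff, Set.mem_setOf_eq,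
        Finset.mem_erase, and_iff_left j.2]
      exact ⟨fun hne => fun hc => hne (Subtype.ext hc), fun hne hc => hne (by rw [hc])⟩
    rw [this, fBasis_image pos f hcard hind (f.erase_subset _)]
  rw [him] at hi
  exact Set.mem_biUnion i.2 hi

theorem interior_hl_nonempty (f : Finset ℕ) (hcard : f.card = 3)
    (hind : AffineIndependent ℝ (fun v : f => pos ↑v)) :
    (interior (hl pos f)).Nonempty := by
  have := interior_hull_nonempty (fBasis pos f hcard hind)
  rwa [fBasis_range] at this

theorem hl_subset_closure_interior (f : Finset ℕ) (hcard : f.card = 3)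
    (hind : AffineIndependent ℝ (fun v : f => pos ↑v)) :
    hl pos f ⊆ closure (interior (hl pos f)) := by
  rcases interior_hl_nonempty pos f hcard hind with ⟨y, hy⟩
  exact fun x hx => mem_closure_interior (convex_hl pos f) hy (subset_closure hx)

end MFTri

namespace MFMain
open MFAux MFAux2 MFTri
set_option linter.unusedSectionVars false
set_option maxHeartbeats 1000000

variable {pos : ℕ → ℝ × ℝ} {V : Finset ℕ} {F : Finset (Finset ℕ)}

theorem hl_eq (s : Finset ℕ) : hl pos s = convexHull ℝ (pos '' ↑s) := rfl

theorem face_card (h : IsTriangulationWith pos V F) {f : Finset ℕ} (hf : f ∈ F) :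
    f.card = 3 := (h.2.2.2.2.2.1 f hf).1

theorem face_sub (h : IsTriangulationWith pos V F) {f : Finset ℕ} (hf : f ∈ F) :
    f ⊆ V ∪ {1, 2, 3} := (h.2.2.2.2.2.1 f hf).2.1

theorem face_ind (h : IsTriangulationWith pos V F) {f : Finset ℕ} (hf : f ∈ F) :
    AffineIndependent ℝ (fun v : f => pos ↑v) := (h.2.2.2.2.2.1 f hf).2.2

theorem face_inter (h : IsTriangulationWith pos V F) {f g : Finset ℕ} (hf : f ∈ F) (hg : g ∈ F) :
    hl pos f ∩ hl pos g = hl pos (f ∩ g) := by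
  have := h.2.2.2.2.2.2.2.2.2 f hf g hg
  simp only [hl_eq]
  rw [this]

/-- distinct faces have disjoint interiors from each other's hulls -/
theorem face_int_disjoint (h : IsTriangulationWith pos V F) {f g : Finset ℕ} (hf : f ∈ F)
    (hg : g ∈ F) (hne : f ≠ g) : interior (hl pos f) ∩ hl pos g = ∅ := by
  have hsub : f ∩ g ⊂ f := by
    refine ⟨Finset.inter_subset_left, fun hcon => ?_⟩
    have hfg : f ⊆ g := fun x hx => Finset.mem_of_mem_inter_right (hcon hx)
    exact hne (Finset.eq_of_subset_of_card_le hfg (by rw [face_card h hf, face_card h hg]))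
  rcases Finset.exists_of_ssubset hsub with ⟨i, hif, hig⟩
  have key := hl_disjoint_interior pos f (face_card h hf) (face_ind h hf)
    (Finset.inter_subset_left (s₁ := f) (s₂ := g)) hif hig
  ext x
  simp only [Set.mem_inter_iff, Set.mem_empty_iff_false, iff_false, not_and]
  intro hx1 hx2
  have : x ∈ hl pos (f ∩ g) := by
    rw [← face_inter h hf hg]; exact ⟨interior_subset hx1, hx2⟩
  have : x ∈ hl pos (f ∩ g) ∩ interior (hl pos f) := ⟨this, hx1⟩
  rw [key] at this
  exact this

/-- edges of a missing face -/
theorem missing_edge {m : Finset ℕ} (hm : IsMissingFace F m) {i : ℕ} (hi : i ∈ m) :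
    (m.erase i).card = 2 ∧ m.erase i ⊆ m :=
  ⟨by rw [Finset.card_erase_of_mem hi, hm.1], Finset.erase_subset _ _⟩

theorem missing_sub (h : IsTriangulationWith pos V F) {m : Finset ℕ} (hm : IsMissingFace F m) :
    m ⊆ V ∪ {1, 2, 3} := by
  intro v hv
  have h2 : 1 < m.card := by rw [hm.1]; norm_num
  rcases Finset.exists_mem_ne h2 v with ⟨u, hu, hune⟩
  have hpair : ({v, u} : Finset ℕ) ⊆ m := by
    intro z hz; rcases Finset.mem_insert.1 hz with rfl | hz
    · exact hv
    · rwa [Finset.mem_singleton.1 hz]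
  have hcard : ({v, u} : Finset ℕ).card = 2 := by
    rw [Finset.card_insert_of_notMem (by simpa using hune.symm), Finset.card_singleton]
  rcases hm.2.2.2 _ hpair hcard with ⟨f, hf, hef⟩
  exact face_sub h hf (hef (by simp))

/-- a face whose hull meets the interior of a (nondegenerate) missing face has its hull
inside the missing face's hull -/
theorem absorb (h : IsTriangulationWith pos V F) {m : Finset ℕ} (hm : IsMissingFace F m)
    (hmind : AffineIndependent ℝ (fun v : m => pos ↑v)) {g : Finset ℕ} (hg : g ∈ F)
    {p : ℝ × ℝ} (hp1 : p ∈ hl pos g) (hp2 : p ∈ interior (hl pos m)) :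
    hl pos g ⊆ hl pos m := by
  -- interior of g is disjoint from frontier of m
  have hfr : interior (hl pos g) ∩ frontier (hl pos m) = ∅ := by
    ext x
    simp only [Set.mem_inter_iff, Set.mem_empty_iff_false, iff_false, not_and]
    intro hx1 hx2
    have hx2' := frontier_hl_subset pos m hm.1 hmind hx2
    rcases Set.mem_iUnion₂.1 hx2' with ⟨i, hi, hxe⟩
    rcases hm.2.2.2 _ (missing_edge hm hi).2 (missing_edge hm hi).1 with ⟨g', hg', heg'⟩
    by_cases hgg : g = g'
    · subst hgg
      have hss : m.erase i ≠ g := fun hcon => by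
        have h1 := face_card h hg
        have h2 := (missing_edge hm hi).1
        rw [hcon] at h2; omega
      rcases Finset.exists_of_ssubset (Finset.ssubset_iff_subset_ne.2 ⟨heg', hss⟩)
        with ⟨j, hjg, hje⟩
      have key := hl_disjoint_interior pos g (face_card h hg) (face_ind h hg) heg' hjg hje
      have : x ∈ hl pos (m.erase i) ∩ interior (hl pos g) := ⟨hxe, hx1⟩
      rw [key] at this; exact this
    · have key := face_int_disjoint h hg hg' hgg
      have : x ∈ interior (hl pos g) ∩ hl pos g' := ⟨hx1, hl_mono pos heg' hxe⟩
      rw [key] at this; exact this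
  -- find a common interior point of g and m
  have hpc : p ∈ closure (interior (hl pos g)) :=
    hl_subset_closure_interior pos g (face_card h hg) (face_ind h hg) hp1
  have hne : (interior (hl pos m) ∩ interior (hl pos g)).Nonempty :=
    _root_.mem_closure_iff.1 hpc _ isOpen_interior hp2
  obtain ⟨z, hz1, hz2⟩ := hne
  -- dichotomy for the interior of g
  have hcover : interior (hl pos g) ⊆ interior (hl pos m) ∪ (hl pos m)ᶜ := by
    intro w hw
    by_cases h1 : w ∈ hl pos m
    · by_cases h2 : w ∈ interior (hl pos m)
      · exact Or.inl h2
      · exfalso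
        have hwf : w ∈ frontier (hl pos m) := by
          rw [frontier, (isClosed_hl pos m).closure_eq]
          exact ⟨h1, h2⟩
        have : w ∈ interior (hl pos g) ∩ frontier (hl pos m) := ⟨hw, hwf⟩
        rw [hfr] at this; exact this
    · exact Or.inr h1
  have hdisj : Disjoint (interior (hl pos m)) (hl pos m)ᶜ :=
    Set.disjoint_compl_right_iff_subset.mpr interior_subset
  rcases IsPreconnected.subset_or_subset isOpen_interior (isClosed_hl pos m).isOpen_compl
      hdisj hcover ((convex_hl pos g).interior.isPreconnected) with hc | hc
  · calc hl pos g ⊆ closure (interior (hl pos g)) :=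
          hl_subset_closure_interior pos g (face_card h hg) (face_ind h hg)
      _ ⊆ closure (interior (hl pos m)) := closure_mono hc
      _ ⊆ closure (hl pos m) := closure_mono interior_subset
      _ = hl pos m := (isClosed_hl pos m).closure_eq
  · exact absurd (interior_subset hz1) (hc hz2)


/-- two edges of missing faces intersect inside the hull of their common vertices -/
theorem edge_inter (h : IsTriangulationWith pos V F) {m m' : Finset ℕ}
    (hm : IsMissingFace F m) (hm' : IsMissingFace F m') {e e' : Finset ℕ}
    (he : e ⊆ m) (he2 : e.card = 2) (he' : e' ⊆ m') (he2' : e'.card = 2) :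
    hl pos e ∩ hl pos e' ⊆ hl pos (e ∩ e') := by
  rcases hm.2.2.2 _ he he2 with ⟨g, hg, heg⟩
  rcases hm'.2.2.2 _ he' he2' with ⟨g', hg', heg'⟩
  intro x hx
  have hx1 : x ∈ hl pos (g ∩ g') := by
    rw [← face_inter h hg hg']
    exact ⟨hl_mono pos heg hx.1, hl_mono pos heg' hx.2⟩
  have hx2 : x ∈ hl pos (e ∩ (g ∩ g')) :=
    hl_inter pos g (face_card h hg) (face_ind h hg) heg Finset.inter_subset_left ⟨hx.1, hx1⟩
  have hstep : e ∩ (g ∩ g') ⊆ g' := fun z hz =>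
    Finset.mem_of_mem_inter_right (Finset.mem_of_mem_inter_right hz)
  have hx3 : x ∈ hl pos ((e ∩ (g ∩ g')) ∩ e') :=
    hl_inter pos g' (face_card h hg') (face_ind h hg') hstep heg' ⟨hx2, hx.2⟩
  refine hl_mono pos ?_ hx3
  intro z hz
  simp only [Finset.mem_inter] at hz ⊢
  exact ⟨hz.1.1, hz.2⟩

/-- a triple whose hull has nonempty interior is affinely independent -/
theorem indep_of_interior_nonempty {m : Finset ℕ} (hm3 : m.card = 3)
    (hne : (interior (hl pos m)).Nonempty) : AffineIndependent ℝ (fun v : m => pos ↑v) := by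
  have hspan : affineSpan ℝ (pos '' ↑m) = ⊤ := affineSpan_eq_top_of_nonempty_interior hne
  have hrange : Set.range (fun v : m => pos ↑v) = pos '' ↑m := by
    rw [← Set.image_univ]
    ext y; constructor
    · rintro ⟨i, -, rfl⟩; exact ⟨↑i, i.2, rfl⟩
    · rintro ⟨v, hv, rfl⟩; exact ⟨⟨v, hv⟩, Set.mem_univ _, rfl⟩
  rw [affineIndependent_iff_finrank_vectorSpan_eq ℝ _
    (by rw [Fintype.card_coe, hm3] : Fintype.card ↥m = 2 + 1)]
  rw [hrange, ← direction_affineSpan, hspan, AffineSubspace.direction_top]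
  rw [finrank_top, finrank_plane]


/-- the big reference triangle -/
def bigT : Set (ℝ × ℝ) := convexHull ℝ ({((0 : ℝ), (0 : ℝ)), (1, 0), (0, 1)} : Set (ℝ × ℝ))

theorem corner_indep :
    AffineIndependent ℝ ![((0:ℝ), (0:ℝ)), ((1:ℝ), (0:ℝ)), ((0:ℝ), (1:ℝ))] := by
  rw [affineIndependent_iff_of_fintype]
  intro w hw hcomb
  rw [Finset.univ.weightedVSub_eq_linear_combination hw] at hcomb
  simp only [Fin.sum_univ_three, Matrix.cons_val_zero, Matrix.cons_val_one, Matrix.head_cons,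
    Matrix.cons_val_two, Matrix.tail_cons, Prod.smul_mk, smul_eq_mul, mul_zero, mul_one,
    Prod.mk_add_mk, add_zero, zero_add, Prod.mk_eq_zero] at hcomb
  rw [Fin.sum_univ_three] at hw
  intro i
  fin_cases i <;> simp <;> linarith [hcomb.1, hcomb.2]

def cornerBasis : AffineBasis (Fin 3) ℝ (ℝ × ℝ) :=
  ⟨![((0:ℝ), (0:ℝ)), ((1:ℝ), (0:ℝ)), ((0:ℝ), (1:ℝ))], corner_indep, by
    rw [corner_indep.affineSpan_eq_top_iff_card_eq_finrank_add_one, Fintype.card_fin,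
      finrank_plane]⟩

theorem cornerBasis_range :
    Set.range (cornerBasis : Fin 3 → ℝ × ℝ)
      = ({((0 : ℝ), (0 : ℝ)), (1, 0), (0, 1)} : Set (ℝ × ℝ)) := by
  show Set.range ![((0:ℝ), (0:ℝ)), ((1:ℝ), (0:ℝ)), ((0:ℝ), (1:ℝ))] = _
  ext y
  constructor
  · rintro ⟨i, rfl⟩
    fin_cases i <;> simp
  · intro hy
    rcases hy with rfl | rfl | rfl
    exacts [⟨0, rfl⟩, ⟨1, rfl⟩, ⟨2, rfl⟩]

theorem corner_not_mem_interior (i : Fin 3) :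
    (cornerBasis : Fin 3 → ℝ × ℝ) i ∉ interior bigT := by
  intro hmem
  obtain ⟨j, hj⟩ := exists_ne i
  have key := hull_disjoint_interior cornerBasis (S := {i}) (i := j) (by simpa using hj)
  rw [cornerBasis_range] at key
  rw [show ({((0 : ℝ), (0 : ℝ)), (1, 0), (0, 1)} : Set (ℝ × ℝ)) = _ from rfl] at key
  change _ ∩ interior bigT = ∅ at key
  have h1 : (cornerBasis : Fin 3 → ℝ × ℝ) i ∈ convexHull ℝ ((cornerBasis : Fin 3 → ℝ × ℝ) '' {i}) :=
    subset_convexHull _ _ ⟨i, rfl, rfl⟩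
  have : (cornerBasis : Fin 3 → ℝ × ℝ) i
      ∈ convexHull ℝ ((cornerBasis : Fin 3 → ℝ × ℝ) '' {i}) ∩ interior bigT := ⟨h1, hmem⟩
  rw [key] at this
  exact this

theorem corner_pos_not_mem_interior (h : IsTriangulationWith pos V F) {w : ℕ}
    (hw : w ∈ ({1, 2, 3} : Finset ℕ)) : pos w ∉ interior bigT := by
  have h1 := h.1
  have h2 := h.2.1
  have h3 := h.2.2.1
  fin_cases hw
  · rw [h1]; exact corner_not_mem_interior 0
  · rw [h2]; exact corner_not_mem_interior 1
  · rw [h3]; exact corner_not_mem_interior 2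

theorem hl_subset_bigT (h : IsTriangulationWith pos V F) {m : Finset ℕ}
    (hsub : m ⊆ V ∪ {1, 2, 3}) : hl pos m ⊆ bigT := by
  refine convexHull_min ?_ (convex_convexHull _ _)
  rintro _ ⟨v, hv, rfl⟩
  rcases Finset.mem_union.1 (hsub hv) with hvV | hvc
  · exact interior_subset (h.2.2.2.2.2.2.2.1 v hvV)
  · have h1 := h.1
    have h2 := h.2.1
    have h3 := h.2.2.1
    fin_cases hvc
    · rw [h1]; exact subset_convexHull _ _ (by simp)
    · rw [h2]; exact subset_convexHull _ _ (by simp)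
    · rw [h3]; exact subset_convexHull _ _ (by simp)


theorem vertex_not_mem_interior {m : Finset ℕ} (hm3 : m.card = 3)
    (hind : AffineIndependent ℝ (fun v : m => pos ↑v)) {w : ℕ} (hw : w ∈ m) :
    pos w ∉ interior (hl pos m) := by
  intro hmem
  rcases Finset.exists_mem_ne (by omega : 1 < m.card) w with ⟨i, hi, hiw⟩
  have key := hl_disjoint_interior pos m hm3 hind
    (by simpa using hw : ({w} : Finset ℕ) ⊆ m) hi (by simpa using hiw)
  have h1 : pos w ∈ hl pos {w} := by
    rw [hl_eq]; simp
  have : pos w ∈ hl pos {w} ∩ interior (hl pos m) := ⟨h1, hmem⟩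
  rw [key] at this; exact this

theorem hl_pair (w c : ℕ) : hl pos {w, c} = segment ℝ (pos w) (pos c) := by
  rw [hl_eq]
  have : pos '' ↑({w, c} : Finset ℕ) = {pos w, pos c} := by simp [Set.image_insert_eq]
  rw [this, convexHull_pair]

theorem hl_single (w : ℕ) : hl pos {w} = {pos w} := by
  rw [hl_eq]; simp

/-- a segment from a vertex of `m₂` lying in `hl m₁` to a vertex outside `hl m₁`
only leaves through that vertex; consequently it avoids the interior. -/
theorem seg_cross (h : IsTriangulationWith pos V F) {m₁ m₂ : Finset ℕ}
    (hm₁ : IsMissingFace F m₁) (hm₂ : IsMissingFace F m₂)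
    (hind₁ : AffineIndependent ℝ (fun v : m₁ => pos ↑v))
    {w c : ℕ} (hwm : w ∈ m₂) (hcm : c ∈ m₂) (hwc : w ≠ c) (hpwc : pos w ≠ pos c)
    (hw : pos w ∈ hl pos m₁) (hc : pos c ∉ hl pos m₁) :
    w ∈ m₁ ∧ segment ℝ (pos w) (pos c) ∩ interior (hl pos m₁) = ∅ := by
  have hwc2 : ({w, c} : Finset ℕ) ⊆ m₂ := by
    intro z hz; rcases Finset.mem_insert.1 hz with rfl | hz
    · exact hwm
    · rwa [Finset.mem_singleton.1 hz]
  have hwccard : ({w, c} : Finset ℕ).card = 2 := by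
    rw [Finset.card_insert_of_notMem (by simpa using hwc), Finset.card_singleton]
  -- any frontier point on the segment is pos w, and w ∈ m₁
  have hkey : ∀ s ∈ segment ℝ (pos w) (pos c) ∩ frontier (hl pos m₁),
      s = pos w ∧ w ∈ m₁ := by
    rintro s ⟨hs1, hs2⟩
    have hs2' := frontier_hl_subset pos m₁ hm₁.1 hind₁ hs2
    rcases Set.mem_iUnion₂.1 hs2' with ⟨i, hi, hse⟩
    have hcne : c ∉ m₁.erase i := by
      intro hcon
      exact hc (subset_convexHull _ _ ⟨c, by
        exact_mod_cast Finset.mem_of_mem_erase hcon, rfl⟩)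
    have hs3 : s ∈ hl pos (m₁.erase i ∩ {w, c}) := by
      refine edge_inter h hm₁ hm₂ (missing_edge hm₁ hi).2 (missing_edge hm₁ hi).1
        hwc2 hwccard ⟨hse, ?_⟩
      rwa [hl_pair]
    have hnonempty : (m₁.erase i ∩ ({w, c} : Finset ℕ)).Nonempty := by
      by_contra hcon
      rw [Finset.not_nonempty_iff_eq_empty] at hcon
      rw [hcon, hl_eq] at hs3
      simpa using hs3
    have hsub : m₁.erase i ∩ ({w, c} : Finset ℕ) ⊆ {w} := by
      intro z hz
      rcases Finset.mem_inter.1 hz with ⟨hz1, hz2⟩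
      rcases Finset.mem_insert.1 hz2 with rfl | hz2
      · simp
      · rw [Finset.mem_singleton.1 hz2] at hz1
        exact absurd hz1 hcne
    have hsw : s ∈ hl pos {w} := hl_mono pos hsub hs3
    rw [hl_single] at hsw
    refine ⟨hsw, ?_⟩
    rcases hnonempty with ⟨z, hz⟩
    have := hsub hz
    rw [Finset.mem_singleton] at this
    subst this
    exact Finset.mem_of_mem_erase (Finset.mem_inter.1 hz).1
  -- such a frontier point exists
  have hhit : (segment ℝ (pos w) (pos c) ∩ frontier (hl pos m₁)).Nonempty := by
    refine frontier_hit (isClosed_hl pos m₁) (convex_segment _ _).isPreconnected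
      ⟨pos w, left_mem_segment _ _ _, hw⟩ ⟨pos c, right_mem_segment _ _ _, hc⟩
  have hwm₁ : w ∈ m₁ := by
    rcases hhit with ⟨s, hs⟩
    exact (hkey s hs).2
  refine ⟨hwm₁, ?_⟩
  -- the half-open part avoids hl m₁ entirely
  set S₀ : Set (ℝ × ℝ) := (fun t : ℝ => pos w + t • (pos c - pos w)) '' Set.Ioc 0 1 with hS₀
  have hS₀pre : IsPreconnected S₀ :=
    isPreconnected_Ioc.image _ (by continuity : Continuous
      (fun t : ℝ => pos w + t • (pos c - pos w))).continuousOn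
  have hS₀seg : S₀ ⊆ segment ℝ (pos w) (pos c) := by
    rw [segment_eq_image']
    exact Set.image_mono Set.Ioc_subset_Icc_self
  have hS₀fr : S₀ ∩ frontier (hl pos m₁) = ∅ := by
    ext s
    simp only [Set.mem_inter_iff, Set.mem_empty_iff_false, iff_false, not_and]
    intro hsS hsf
    have hseq := (hkey s ⟨hS₀seg hsS, hsf⟩).1
    rcases hsS with ⟨t, ht, hts⟩
    rw [hseq] at hts
    have : t • (pos c - pos w) = 0 := by
      have := congrArg (fun z => z - pos w) hts
      simpa using this
    rcases smul_eq_zero.1 this with h0 | h0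
    · exact absurd h0 (ne_of_gt ht.1)
    · exact hpwc (by
        have := sub_eq_zero.1 h0
        exact this.symm ▸ rfl)
  have hS₀sub : S₀ ⊆ (hl pos m₁)ᶜ := by
    have hcover : S₀ ⊆ interior (hl pos m₁) ∪ (hl pos m₁)ᶜ := by
      intro s hs
      by_cases h1 : s ∈ hl pos m₁
      · by_cases h2 : s ∈ interior (hl pos m₁)
        · exact Or.inl h2
        · exfalso
          have hsf : s ∈ frontier (hl pos m₁) := by
            rw [frontier, (isClosed_hl pos m₁).closure_eq]; exact ⟨h1, h2⟩
          have : s ∈ S₀ ∩ frontier (hl pos m₁) := ⟨hs, hsf⟩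
          rw [hS₀fr] at this; exact this
      · exact Or.inr h1
    have hdisj : Disjoint (interior (hl pos m₁)) (hl pos m₁)ᶜ :=
      Set.disjoint_compl_right_iff_subset.mpr interior_subset
    rcases IsPreconnected.subset_or_subset isOpen_interior (isClosed_hl pos m₁).isOpen_compl
        hdisj hcover hS₀pre with hcase | hcase
    · exfalso
      have hcmem : pos c ∈ S₀ := ⟨1, by norm_num, by simp⟩
      exact hc (interior_subset (hcase hcmem))
    · exact hcase
  -- now the whole segment avoids the interior
  ext s
  simp only [Set.mem_inter_iff, Set.mem_empty_iff_false, iff_false, not_and]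
  intro hs1 hs2
  rw [segment_eq_image'] at hs1
  rw [show Set.Icc (0:ℝ) 1 = insert 0 (Set.Ioc 0 1) from (Set.Ioc_insert_left zero_le_one).symm,
    Set.image_insert_eq] at hs1
  rcases hs1 with hs1 | hs1
  · simp only [zero_smul, add_zero] at hs1
    rw [hs1] at hs2
    exact vertex_not_mem_interior hm₁.1 hind₁ hwm₁ hs2
  · exact (hS₀sub hs1) (interior_subset hs2)


/-- the central contradiction: two nondegenerate missing faces whose interiors
overlap must be nested -/
theorem key_lemma (h : IsTriangulationWith pos V F) {m₁ m₂ : Finset ℕ}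
    (hm₁ : IsMissingFace F m₁) (hm₂ : IsMissingFace F m₂)
    (hind₁ : AffineIndependent ℝ (fun v : m₁ => pos ↑v))
    (hind₂ : AffineIndependent ℝ (fun v : m₂ => pos ↑v))
    (hx : (interior (hl pos m₁) ∩ interior (hl pos m₂)).Nonempty)
    (hn₁ : ¬ interior (hl pos m₁) ⊆ interior (hl pos m₂))
    (hn₂ : ¬ interior (hl pos m₂) ⊆ interior (hl pos m₁)) : False := by
  obtain ⟨x, hx1, hx2⟩ := hx
  -- step 1: a point of the interior of m₁ on the frontier of m₂
  have hp : (interior (hl pos m₁) ∩ frontier (hl pos m₂)).Nonempty := by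
    by_contra hcon
    rcases Set.not_subset.1 hn₁ with ⟨y, hy1, hy2⟩
    have hynot : y ∉ hl pos m₂ := by
      intro hymem
      exact hcon ⟨y, hy1, by
        rw [frontier, (isClosed_hl pos m₂).closure_eq]; exact ⟨hymem, hy2⟩⟩
    exact hcon (frontier_hit (isClosed_hl pos m₂)
      ((convex_hl pos m₁).interior.isPreconnected)
      ⟨x, hx1, interior_subset hx2⟩ ⟨y, hy1, hynot⟩)
  obtain ⟨p, hpA, hpfB⟩ := hp
  -- step 2: p lies on an edge of m₂
  rcases Set.mem_iUnion₂.1 (frontier_hl_subset pos m₂ hm₂.1 hind₂ hpfB) with ⟨c, hcm₂, hpe⟩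
  -- step 3: that edge is absorbed into hl m₁
  rcases hm₂.2.2.2 _ (missing_edge hm₂ hcm₂).2 (missing_edge hm₂ hcm₂).1 with ⟨g, hg, heg⟩
  have hgsub : hl pos g ⊆ hl pos m₁ :=
    absorb h hm₁ hind₁ hg (hl_mono pos heg hpe) hpA
  have hesub : hl pos (m₂.erase c) ⊆ hl pos m₁ := (hl_mono pos heg).trans hgsub
  -- step 4: the third vertex avoids hl m₁
  have hcnot : pos c ∉ hl pos m₁ := by
    intro hcon
    refine hn₂ (interior_mono (convexHull_min ?_ (convex_hl pos m₁)))
    rintro _ ⟨v, hv, rfl⟩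
    by_cases hvc : v = c
    · subst hvc; exact hcon
    · exact hesub (subset_convexHull _ _ ⟨v, by
        exact_mod_cast Finset.mem_erase.2 ⟨hvc, by exact_mod_cast hv⟩, rfl⟩)
  -- step 5: name the two endpoints of the edge
  rcases Finset.card_eq_two.1 (missing_edge hm₂ hcm₂).1 with ⟨a, b, hab, habe⟩
  have ham₂ : a ∈ m₂ := Finset.mem_of_mem_erase (habe ▸ (by simp : a ∈ ({a, b} : Finset ℕ)))
  have hbm₂ : b ∈ m₂ := Finset.mem_of_mem_erase (habe ▸ (by simp : b ∈ ({a, b} : Finset ℕ)))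
  have hac : a ≠ c := by
    intro hcon; subst hcon
    exact (Finset.notMem_erase a m₂) (habe ▸ (by simp : a ∈ ({a, b} : Finset ℕ)))
  have hbc : b ≠ c := by
    intro hcon; subst hcon
    exact (Finset.notMem_erase b m₂) (habe ▸ (by simp : b ∈ ({a, b} : Finset ℕ)))
  have hposa : pos a ∈ hl pos m₁ :=
    hesub (subset_convexHull _ _ ⟨a, by exact_mod_cast habe ▸ (by simp : a ∈ ({a, b} : Finset ℕ)), rfl⟩)
  have hposb : pos b ∈ hl pos m₁ :=
    hesub (subset_convexHull _ _ ⟨b, by exact_mod_cast habe ▸ (by simp : b ∈ ({a, b} : Finset ℕ)), rfl⟩)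
  have hm₂sub := missing_sub h hm₂
  have hinj := h.2.2.2.2.1
  have hpac : pos a ≠ pos c := fun hcon =>
    hac (hinj (by exact_mod_cast hm₂sub ham₂) (by exact_mod_cast hm₂sub hcm₂) hcon)
  have hpbc : pos b ≠ pos c := fun hcon =>
    hbc (hinj (by exact_mod_cast hm₂sub hbm₂) (by exact_mod_cast hm₂sub hcm₂) hcon)
  -- step 6: both a and b are vertices of m₁ and the side segments avoid interior m₁
  obtain ⟨ham₁, hsegA⟩ := seg_cross h hm₁ hm₂ hind₁ ham₂ hcm₂ hac hpac hposa hcnot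
  obtain ⟨hbm₁, hsegB⟩ := seg_cross h hm₁ hm₂ hind₁ hbm₂ hcm₂ hbc hpbc hposb hcnot
  -- step 7: the interior of m₁ misses the whole frontier of m₂ : contradiction with p
  have hfinal : interior (hl pos m₁) ∩ frontier (hl pos m₂) = ∅ := by
    ext s
    simp only [Set.mem_inter_iff, Set.mem_empty_iff_false, iff_false, not_and]
    intro hs1 hs2
    rcases Set.mem_iUnion₂.1 (frontier_hl_subset pos m₂ hm₂.1 hind₂ hs2) with ⟨i, him₂, hse⟩
    by_cases hic : i = c
    · subst hic
      rw [habe] at hse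
      have hsubm₁ : ({a, b} : Finset ℕ) ⊆ m₁ := by
        intro z hz; rcases Finset.mem_insert.1 hz with rfl | hz
        · exact ham₁
        · rwa [Finset.mem_singleton.1 hz]
      have hex : ∃ k ∈ m₁, k ∉ ({a, b} : Finset ℕ) := by
        by_contra hcon
        push_neg at hcon
        have hsub2 : m₁ ⊆ ({a, b} : Finset ℕ) := hcon
        have := Finset.card_le_card hsub2
        rw [hm₁.1] at this
        have : ({a, b} : Finset ℕ).card ≤ 2 := Finset.card_insert_le _ _ |>.trans (by simp)
        omega
      rcases hex with ⟨k, hk1, hk2⟩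
      have key := hl_disjoint_interior pos m₁ hm₁.1 hind₁ hsubm₁ hk1 hk2
      have : s ∈ hl pos {a, b} ∩ interior (hl pos m₁) := ⟨hse, hs1⟩
      rw [key] at this; exact this
    · -- the edge erase i is inside one of the two side segments
      have hm₂eq : m₂ = insert c (m₂.erase c) := (Finset.insert_erase hcm₂).symm
      have him' : i ∈ ({a, b} : Finset ℕ) := by
        have : i ∈ insert c (m₂.erase c) := hm₂eq ▸ him₂
        rcases Finset.mem_insert.1 this with rfl | hin
        · exact absurd rfl hic
        · rwa [habe] at hin
      rcases Finset.mem_insert.1 him' with rfl | him'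
      · -- i = a : edge ⊆ {b, c}
        have hsub : m₂.erase i ⊆ ({b, c} : Finset ℕ) := by
          intro z hz
          rcases Finset.mem_erase.1 hz with ⟨hzi, hzm⟩
          have : z ∈ insert c (m₂.erase c) := hm₂eq ▸ hzm
          rcases Finset.mem_insert.1 this with rfl | hin
          · simp
          · rw [habe] at hin
            rcases Finset.mem_insert.1 hin with rfl | hin
            · exact absurd rfl hzi
            · rw [Finset.mem_singleton.1 hin]; simp
        have : s ∈ segment ℝ (pos b) (pos c) := by
          rw [← hl_pair]; exact hl_mono pos hsub hse
        have hmem : s ∈ segment ℝ (pos b) (pos c) ∩ interior (hl pos m₁) := ⟨this, hs1⟩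
        rw [hsegB] at hmem; exact hmem
      · rw [Finset.mem_singleton.1 him'] at hse
        have hsub : m₂.erase b ⊆ ({a, c} : Finset ℕ) := by
          intro z hz
          rcases Finset.mem_erase.1 hz with ⟨hzi, hzm⟩
          have : z ∈ insert c (m₂.erase c) := hm₂eq ▸ hzm
          rcases Finset.mem_insert.1 this with rfl | hin
          · simp
          · rw [habe] at hin
            rcases Finset.mem_insert.1 hin with rfl | hin
            · simp
            · exact absurd (Finset.mem_singleton.1 hin) hzi
        have : s ∈ segment ℝ (pos a) (pos c) := by
          rw [← hl_pair]; exact hl_mono pos hsub hse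
        have hmem : s ∈ segment ℝ (pos a) (pos c) ∩ interior (hl pos m₁) := ⟨this, hs1⟩
        rw [hsegA] at hmem; exact hmem
  have : p ∈ interior (hl pos m₁) ∩ frontier (hl pos m₂) := ⟨hpA, hpfB⟩
  rw [hfinal] at this; exact this


/-- Part 1: trichotomy -/
theorem part1 (h : IsTriangulationWith pos V F) {m₁ m₂ : Finset ℕ}
    (h₁ : IsMissingFace F m₁) (h₂ : IsMissingFace F m₂) :
    Disjoint (interior (hl pos m₁)) (interior (hl pos m₂)) ∨
      interior (hl pos m₁) ⊆ interior (hl pos m₂) ∨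
      interior (hl pos m₂) ⊆ interior (hl pos m₁) := by
  by_cases hne : (interior (hl pos m₁) ∩ interior (hl pos m₂)).Nonempty
  · have hne₁ : (interior (hl pos m₁)).Nonempty := hne.mono Set.inter_subset_left
    have hne₂ : (interior (hl pos m₂)).Nonempty := hne.mono Set.inter_subset_right
    have hind₁ := indep_of_interior_nonempty h₁.1 hne₁
    have hind₂ := indep_of_interior_nonempty h₂.1 hne₂
    by_cases hc₁ : interior (hl pos m₁) ⊆ interior (hl pos m₂)
    · exact Or.inr (Or.inl hc₁)
    · by_cases hc₂ : interior (hl pos m₂) ⊆ interior (hl pos m₁)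
      · exact Or.inr (Or.inr hc₂)
      · exact absurd (key_lemma h h₁ h₂ hind₁ hind₂ hne hc₁ hc₂) not_false
  · rw [Set.not_nonempty_iff_eq_empty] at hne
    exact Or.inl (Set.disjoint_iff_inter_eq_empty.2 hne)

/-- Part 2, nested case: nested missing faces with the same interior vertices coincide -/
theorem nested_eq (h : IsTriangulationWith pos V F) {m m' : Finset ℕ}
    (hm : IsMissingFace F m) (hm' : IsMissingFace F m')
    (hindm : AffineIndependent ℝ (fun v : m => pos ↑v))
    (hindm' : AffineIndependent ℝ (fun v : m' => pos ↑v))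
    (hsub : interior (hl pos m) ⊆ interior (hl pos m'))
    (hS : ∀ v ∈ V, pos v ∈ interior (hl pos m') → pos v ∈ interior (hl pos m)) :
    m = m' := by
  by_contra hne
  have hnsub : ¬ m ⊆ m' := fun hcon =>
    hne (Finset.eq_of_subset_of_card_le hcon (by rw [hm.1, hm'.1]))
  rcases Finset.not_subset.1 hnsub with ⟨w, hwm, hwm'⟩
  have hwhull : pos w ∈ hl pos m := subset_convexHull _ _ ⟨w, by exact_mod_cast hwm, rfl⟩
  have hhull : hl pos m ⊆ hl pos m' := by
    calc hl pos m ⊆ closure (interior (hl pos m)) :=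
          hl_subset_closure_interior pos m hm.1 hindm
      _ ⊆ closure (interior (hl pos m')) := closure_mono hsub
      _ ⊆ closure (hl pos m') := closure_mono interior_subset
      _ = hl pos m' := (isClosed_hl pos m').closure_eq
  by_cases hwi : pos w ∈ interior (hl pos m')
  · rcases Finset.mem_union.1 (missing_sub h hm hwm) with hwV | hwc
    · exact vertex_not_mem_interior hm.1 hindm hwm (hS w hwV hwi)
    · have : pos w ∈ interior bigT :=
        interior_mono (hl_subset_bigT h (missing_sub h hm')) hwi
      exact corner_pos_not_mem_interior h hwc this
  · -- pos w lies on the frontier of hl m'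
    have hwf : pos w ∈ frontier (hl pos m') := by
      rw [frontier, (isClosed_hl pos m').closure_eq]
      exact ⟨hhull hwhull, hwi⟩
    rcases Set.mem_iUnion₂.1 (frontier_hl_subset pos m' hm'.1 hindm' hwf) with ⟨i, him', hwe⟩
    rcases Finset.exists_mem_ne (by rw [hm.1]; norm_num : 1 < m.card) w
      with ⟨u, hum, huw⟩
    have he₁ : ({w, u} : Finset ℕ) ⊆ m := by
      intro z hz; rcases Finset.mem_insert.1 hz with rfl | hz
      · exact hwm
      · rwa [Finset.mem_singleton.1 hz]
    have he₁card : ({w, u} : Finset ℕ).card = 2 := by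
      rw [Finset.card_insert_of_notMem (by simpa using huw.symm), Finset.card_singleton]
    rcases hm.2.2.2 _ he₁ he₁card with ⟨g, hg, heg⟩
    have hwhl : pos w ∈ hl pos {w, u} := subset_convexHull _ _ ⟨w, by simp, rfl⟩
    have hxint : pos w ∈ hl pos (({w, u} : Finset ℕ) ∩ m'.erase i) :=
      edge_inter h hm hm' he₁ he₁card (missing_edge hm' him').2 (missing_edge hm' him').1
        ⟨hwhl, hwe⟩
    have hwing : w ∈ g := heg (by simp)
    have hwmem : w ∈ ({w, u} : Finset ℕ) ∩ m'.erase i :=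
      vertex_mem_of_mem_hl pos g (face_card h hg) (face_ind h hg)
        (Finset.inter_subset_left.trans heg) hwing hxint
    exact hwm' (Finset.mem_of_mem_erase (Finset.mem_inter.1 hwmem).2)

end MFMain

open MFTri MFMain

/-- The interiors of any two missing faces of a triangulation of `[123]` are either
disjoint or one contains the other; hence if `j > k/2` (where `k` is the number of
internal vertices) there is at most one missing face of density `j`. -/
theorem missing_faces_nested_or_disjoint (pos : ℕ → ℝ × ℝ) (V : Finset ℕ)
    (F : Finset (Finset ℕ)) (h : IsTriangulationWith pos V F)
    (m₁ m₂ : Finset ℕ) (h₁ : IsMissingFace F m₁) (h₂ : IsMissingFace F m₂) :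
    (Disjoint (interior (convexHull ℝ (pos '' ↑m₁))) (interior (convexHull ℝ (pos '' ↑m₂))) ∨
      interior (convexHull ℝ (pos '' ↑m₁)) ⊆ interior (convexHull ℝ (pos '' ↑m₂)) ∨
      interior (convexHull ℝ (pos '' ↑m₂)) ⊆ interior (convexHull ℝ (pos '' ↑m₁))) ∧
    (∀ j : ℕ, V.card < 2 * j →
      densityOf pos V m₁ = j → densityOf pos V m₂ = j → m₁ = m₂) := by
  have tri := part1 h h₁ h₂
  constructor
  · exact tri
  · intro j hj d₁ d₂
    classical
    have hd : ∀ m : Finset ℕ, densityOf pos V m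
        = (V.filter (fun v => pos v ∈ interior (convexHull ℝ (pos '' ↑m)))).card := by
      intro m
      rw [densityOf, ← Set.ncard_coe_finset]
      congr 1
      ext v
      simp
    have hne₁ : (interior (convexHull ℝ (pos '' (↑m₁ : Set ℕ)))).Nonempty := by
      rcases Set.eq_empty_or_nonempty (interior (convexHull ℝ (pos '' (↑m₁ : Set ℕ))))
        with hcon | hne
      · exfalso
        have hz : densityOf pos V m₁ = 0 := by
          rw [hd, Finset.card_eq_zero, Finset.filter_eq_empty_iff]
          intro v _
          rw [hcon]
          exact Set.notMem_empty _
        omega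
      · exact hne
    have hne₂ : (interior (convexHull ℝ (pos '' (↑m₂ : Set ℕ)))).Nonempty := by
      rcases Set.eq_empty_or_nonempty (interior (convexHull ℝ (pos '' (↑m₂ : Set ℕ))))
        with hcon | hne
      · exfalso
        have hz : densityOf pos V m₂ = 0 := by
          rw [hd, Finset.card_eq_zero, Finset.filter_eq_empty_iff]
          intro v _
          rw [hcon]
          exact Set.notMem_empty _
        omega
      · exact hne
    have hind₁ : AffineIndependent ℝ (fun v : m₁ => pos ↑v) :=
      indep_of_interior_nonempty h₁.1 hne₁
    have hind₂ : AffineIndependent ℝ (fun v : m₂ => pos ↑v) :=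
      indep_of_interior_nonempty h₂.1 hne₂
    set f₁ := V.filter (fun v => pos v ∈ interior (convexHull ℝ (pos '' (↑m₁ : Set ℕ))))
      with hf₁
    set f₂ := V.filter (fun v => pos v ∈ interior (convexHull ℝ (pos '' (↑m₂ : Set ℕ))))
      with hf₂
    have hcard₁ : f₁.card = j := by rw [← hf₁, ← hd] at *; · exact d₁
    have hcard₂ : f₂.card = j := by rw [← hf₂, ← hd] at *; · exact d₂
    rcases tri with hdisj | hsub | hsub
    · exfalso
      have hdisjf : Disjoint f₁ f₂ := by
        rw [Finset.disjoint_left]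
        intro v hv1 hv2
        exact Set.disjoint_left.1 hdisj (Finset.mem_filter.1 hv1).2 (Finset.mem_filter.1 hv2).2
      have hcard : f₁.card + f₂.card ≤ V.card := by
        rw [← Finset.card_union_of_disjoint hdisjf]
        exact Finset.card_le_card (Finset.union_subset (Finset.filter_subset _ _)
          (Finset.filter_subset _ _))
      omega
    · have hsubf : f₁ ⊆ f₂ := fun v hv => Finset.mem_filter.2
        ⟨(Finset.mem_filter.1 hv).1, hsub (Finset.mem_filter.1 hv).2⟩
      have heqf : f₁ = f₂ := Finset.eq_of_subset_of_card_le hsubf (by omega)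
      refine nested_eq h h₁ h₂ hind₁ hind₂ hsub ?_
      intro v hv hmem
      have : v ∈ f₂ := Finset.mem_filter.2 ⟨hv, hmem⟩
      rw [← heqf] at this
      exact (Finset.mem_filter.1 this).2
    · have hsubf : f₂ ⊆ f₁ := fun v hv => Finset.mem_filter.2
        ⟨(Finset.mem_filter.1 hv).1, hsub (Finset.mem_filter.1 hv).2⟩
      have heqf : f₂ = f₁ := Finset.eq_of_subset_of_card_le hsubf (by omega)
      refine (nested_eq h h₂ h₁ hind₂ hind₁ hsub ?_).symm
      intro v hv hmem
      have : v ∈ f₁ := Finset.mem_filter.2 ⟨hv, hmem⟩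
      rw [← heqf] at this
      exact (Finset.mem_filter.1 this).2
end
end

section
/- Let c > 1/√γ, γ = 256/27, k = ⌈log² n⌉, and let μ be the expected number of (k/2)-simple, properly n-labeled triangulations of [123] with k internal vertices present in Y₂(n, c/√n). Then μ ≥ n^{Ω(log n)}; in particular μ → ∞ superpolynomially. -/
open Filter

noncomputable section

set_option maxHeartbeats 2000000 in
/-- Let `c > 1/√γ` (`γ = 256/27`) and `k = ⌈log² n⌉`. The expected number `μ n` of
`(k/2)`-simple, properly `n`-labeled triangulations of `[123]` with `k` internal vertices
present in `Y₂(n, c/√n)` equals `N_simple(k) · C(n-3, k) · (c/√n)^(2k+1)`; given the lower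
bound `N_simple(k) ≥ k! γ^k / k^C` on the number of `(k/2)`-simple triangulations, one has
`μ ≥ n^{Ω(log n)}`, i.e. `μ` tends to infinity superpolynomially. -/
theorem mu_superpolynomial (c : ℝ) (hc : 1 / Real.sqrt ((256 : ℝ) / 27) < c)
    (Nsimple : ℕ → ℕ)
    (hNs : ∃ C : ℝ, 0 < C ∧ ∀ k : ℕ, 2 ≤ k →
      (Nat.factorial k : ℝ) * ((256 : ℝ) / 27) ^ k / (k : ℝ) ^ C ≤ (Nsimple k : ℝ))
    (μ : ℕ → ℝ)
    (hμ : ∀ n : ℕ, μ n =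
      (Nsimple ⌈(Real.log n) ^ 2⌉₊ : ℝ) * (Nat.choose (n - 3) ⌈(Real.log n) ^ 2⌉₊ : ℝ) *
        (c / Real.sqrt n) ^ (2 * ⌈(Real.log n) ^ 2⌉₊ + 1)) :
    ∃ ε : ℝ, 0 < ε ∧ ∃ N : ℕ, ∀ n : ℕ, N ≤ n →
      (n : ℝ) ^ (ε * Real.log n) ≤ μ n := by
  obtain ⟨C, hC, hNs⟩ := hNs
  set γ : ℝ := (256 : ℝ) / 27 with hγdef
  have hγ : (0 : ℝ) < γ := by norm_num [hγdef]
  have hsγ : (0 : ℝ) < Real.sqrt γ := Real.sqrt_pos.mpr hγ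
  have hc0 : 0 < c := lt_trans (by positivity) hc
  have hA : 1 < γ * c ^ 2 := by
    have h1 : 1 < c * Real.sqrt γ := by
      rw [div_lt_iff₀ hsγ] at hc
      linarith
    have h2 : 1 < (c * Real.sqrt γ) ^ 2 := one_lt_pow₀ h1 two_ne_zero
    calc (1 : ℝ) < (c * Real.sqrt γ) ^ 2 := h2
      _ = γ * c ^ 2 := by
        rw [mul_pow, Real.sq_sqrt hγ.le]; ring
  set A : ℝ := γ * c ^ 2 with hAdef
  have hA0 : 0 < A := by positivity
  set b : ℝ := Real.sqrt A with hbdef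
  have hb : 1 < b := by
    rw [hbdef]
    rw [show (1:ℝ) = Real.sqrt 1 by simp]
    exact Real.sqrt_lt_sqrt (by norm_num) hA
  have hb0 : 0 < b := lt_trans one_pos hb
  set r : ℝ := 1 / b with hrdef
  have hr0 : 0 < r := by positivity
  have hr1 : r < 1 := by
    rw [hrdef]; rw [div_lt_one hb0]; exact hb
  have hbr : γ * c ^ 2 * r = b := by
    rw [hrdef, hbdef]
    rw [mul_one_div, ← hAdef, Real.div_sqrt]
  set ε : ℝ := Real.log b / 4 with hεdef
  have hε : 0 < ε := by
    have := Real.log_pos hb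
    rw [hεdef]; linarith
  refine ⟨ε, hε, ?_⟩
  have hlog : Tendsto (fun n : ℕ => Real.log n) atTop atTop :=
    Real.tendsto_log_atTop.comp tendsto_natCast_atTop_atTop
  -- Eventual hypotheses
  have E1 : ∀ᶠ n : ℕ in atTop, (2 : ℝ) ≤ Real.log n :=
    hlog.eventually_ge_atTop 2
  have E2 : ∀ᶠ n : ℕ in atTop, (Real.log n) ^ 2 + 3 ≤ (1 - r) * n := by
    have ho : (fun x : ℝ => Real.log x ^ 2) =o[atTop] id :=
      Real.isLittleO_pow_log_id_atTop
    have h2 : ∀ᶠ x : ℝ in atTop, ‖Real.log x ^ 2‖ ≤ ((1 - r) / 2) * ‖id x‖ :=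
      ho.bound (by linarith : (0:ℝ) < (1 - r) / 2)
    have h3 : ∀ᶠ n : ℕ in atTop, ‖Real.log (n:ℝ) ^ 2‖ ≤ ((1 - r) / 2) * ‖id (n:ℝ)‖ :=
      tendsto_natCast_atTop_atTop.eventually h2
    have h4 : ∀ᶠ n : ℕ in atTop, (3 : ℝ) ≤ ((1 - r) / 2) * n := by
      have : Tendsto (fun n : ℕ => ((1 - r) / 2) * (n:ℝ)) atTop atTop :=
        (tendsto_natCast_atTop_atTop (R := ℝ)).const_mul_atTop (by linarith)
      exact this.eventually_ge_atTop 3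
    filter_upwards [h3, h4] with n h3 h4
    have hn0 : (0:ℝ) ≤ (n:ℝ) := Nat.cast_nonneg n
    rw [Real.norm_eq_abs, Real.norm_eq_abs, id] at h3
    rw [abs_of_nonneg (by positivity), abs_of_nonneg hn0] at h3
    nlinarith
  have E3 : ∀ᶠ n : ℕ in atTop, (1 : ℝ) ≤ 3 * ε * Real.log n - C - 1/2 := by
    have : Tendsto (fun n : ℕ => 3 * ε * Real.log n) atTop atTop :=
      (hlog.const_mul_atTop (by positivity))
    have := this.eventually_ge_atTop (1 + C + 1/2)
    filter_upwards [this] with n h; linarith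
  have E4 : ∀ᶠ n : ℕ in atTop, 1 / c ≤ (n : ℝ) :=
    (tendsto_natCast_atTop_atTop (R := ℝ)).eventually_ge_atTop (1/c)
  have main : ∀ᶠ n : ℕ in atTop, (n : ℝ) ^ (ε * Real.log n) ≤ μ n := by
    filter_upwards [E1, E2, E3, E4, eventually_ge_atTop 5] with n h1 h2 h3 h4 h5
    set k : ℕ := ⌈(Real.log n) ^ 2⌉₊ with hkdef
    have hL2 : (4 : ℝ) ≤ (Real.log n) ^ 2 := by nlinarith
    have hkl : ((Real.log n) ^ 2 : ℝ) ≤ k := Nat.le_ceil _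
    have hku : (k : ℝ) ≤ (Real.log n) ^ 2 + 1 :=
      (Nat.ceil_lt_add_one (by positivity)).le
    have hk2 : 2 ≤ k := by
      have : (2 : ℝ) ≤ (k : ℝ) := by linarith
      exact_mod_cast this
    have hk1 : (1 : ℝ) ≤ (k : ℝ) := by
      have := hk2; exact_mod_cast Nat.one_le_of_lt hk2
    have hn0 : (0 : ℝ) < (n : ℝ) := by
      have : (0:ℕ) < n := by omega
      exact_mod_cast this
    have hn1 : (1 : ℝ) ≤ (n : ℝ) := by exact_mod_cast Nat.one_le_of_lt (by omega : 1 < n)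
    -- k + 2 ≤ (1-r) n
    have hkn : (k : ℝ) + 2 ≤ (1 - r) * n := by linarith
    have hknn : (k : ℝ) + 2 ≤ (n : ℝ) := by nlinarith
    have hkn' : k + 2 ≤ n := by exact_mod_cast hknn
    have hrn : r * n ≤ (n : ℝ) - (k + 2) := by nlinarith
    -- binomial lower bound
    have hdesc : ((n - (k + 2) : ℕ) : ℝ) ^ k ≤ (Nat.factorial k : ℝ) * (Nat.choose (n-3) k : ℝ) := by
      have h := Nat.pow_sub_le_descFactorial (n - 3) k
      rw [Nat.descFactorial_eq_factorial_mul_choose] at h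
      have heq : n - 3 + 1 - k = n - (k + 2) := by omega
      rw [heq] at h
      exact_mod_cast h
    have hcast : ((n - (k + 2) : ℕ) : ℝ) = (n : ℝ) - (k + 2) := by
      push_cast [Nat.cast_sub hkn']; ring
    have hrnk : (r * n) ^ k ≤ (Nat.factorial k : ℝ) * (Nat.choose (n-3) k : ℝ) := by
      refine le_trans ?_ hdesc
      rw [hcast]
      exact pow_le_pow_left₀ (by positivity) hrn k
    -- probability term
    have hsn : (0 : ℝ) < Real.sqrt n := Real.sqrt_pos.mpr hn0
    have hP : (c / Real.sqrt n) ^ (2 * k + 1)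
        = c ^ (2 * k + 1) / ((n : ℝ) ^ k * Real.sqrt n) := by
      rw [div_pow]
      congr 1
      rw [pow_succ, pow_mul, Real.sq_sqrt hn0.le]
    have hP0 : (0 : ℝ) < (c / Real.sqrt n) ^ (2 * k + 1) := by positivity
    have hkC : (0 : ℝ) < (k : ℝ) ^ C := Real.rpow_pos_of_pos (by linarith) C
    -- chain
    have step1 : (Nat.factorial k : ℝ) * γ ^ k / (k : ℝ) ^ C * ((Nat.choose (n-3) k : ℝ))
        * (c / Real.sqrt n) ^ (2 * k + 1) ≤ μ n := by
      rw [hμ n, ← hkdef]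
      have := hNs k hk2
      have hch : (0:ℝ) ≤ (Nat.choose (n-3) k : ℝ) := Nat.cast_nonneg _
      exact mul_le_mul_of_nonneg_right
        (mul_le_mul_of_nonneg_right this hch) hP0.le
    have step2 : γ ^ k / (k : ℝ) ^ C * (r * n) ^ k
        * (c / Real.sqrt n) ^ (2 * k + 1)
        ≤ (Nat.factorial k : ℝ) * γ ^ k / (k : ℝ) ^ C * ((Nat.choose (n-3) k : ℝ))
        * (c / Real.sqrt n) ^ (2 * k + 1) := by
      have h : γ ^ k / (k : ℝ) ^ C * (r * n) ^ k
          ≤ (Nat.factorial k : ℝ) * γ ^ k / (k : ℝ) ^ C * ((Nat.choose (n-3) k : ℝ)) := by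
        have e : (Nat.factorial k : ℝ) * γ ^ k / (k : ℝ) ^ C * ((Nat.choose (n-3) k : ℝ))
            = γ ^ k / (k : ℝ) ^ C * ((Nat.factorial k : ℝ) * (Nat.choose (n-3) k : ℝ)) := by
          ring
        rw [e]
        exact mul_le_mul_of_nonneg_left hrnk (by positivity)
      exact mul_le_mul_of_nonneg_right h hP0.le
    have key : γ ^ k / (k : ℝ) ^ C * (r * n) ^ k * (c / Real.sqrt n) ^ (2 * k + 1)
        = b ^ k * c / ((k : ℝ) ^ C * Real.sqrt n) := by
      have e1 : γ ^ k * (r * (n:ℝ)) ^ k * c ^ (2*k+1) = b ^ k * c * (n:ℝ)^k := by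
        have h2 : c ^ (2*k+1) = (c^2)^k * c := by rw [pow_succ, pow_mul]
        have h3 : γ ^ k * (r * (n:ℝ)) ^ k * ((c^2)^k * c) = (γ * (r*(n:ℝ)) * c^2)^k * c := by
          rw [mul_pow, mul_pow]; ring
        rw [h2, h3, show γ * (r * (n:ℝ)) * c^2 = b * (n:ℝ) by rw [← hbr]; ring, mul_pow]
        ring
      rw [hP, div_mul_eq_mul_div, div_mul_div_comm, e1]
      rw [show (k:ℝ)^C * ((n:ℝ)^k * Real.sqrt n) = ((k:ℝ)^C * Real.sqrt n) * (n:ℝ)^k by ring,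
        show b^k * c * (n:ℝ)^k = (b^k*c) * (n:ℝ)^k by ring]
      rw [mul_div_mul_right _ _ (show ((n:ℝ)^k) ≠ 0 by positivity)]
    -- lower bound for b^k
    have hbk : (n : ℝ) ^ ((4 * ε) * Real.log n) ≤ b ^ k := by
      have h1 : b ^ k = b ^ ((k : ℝ) : ℝ) := by
        rw [Real.rpow_natCast]
      rw [h1]
      have h2 : b ^ ((Real.log n) ^ 2 : ℝ) ≤ b ^ ((k : ℝ) : ℝ) :=
        Real.rpow_le_rpow_of_exponent_le hb.le hkl
      refine le_trans (le_of_eq ?_) h2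
      rw [Real.rpow_def_of_pos hn0, Real.rpow_def_of_pos hb0]
      congr 1
      rw [hεdef]; ring
    -- final comparison
    have hfin : (n : ℝ) ^ (ε * Real.log n) * ((k : ℝ) ^ C * Real.sqrt n)
        ≤ b ^ k * c := by
      have hkCn : (k : ℝ) ^ C ≤ (n : ℝ) ^ C :=
        Real.rpow_le_rpow (by linarith) (by linarith) hC.le
      have hsq : Real.sqrt n = (n : ℝ) ^ ((1:ℝ)/2) := Real.sqrt_eq_rpow n
      have hup : (n : ℝ) ^ (ε * Real.log n) * ((k : ℝ) ^ C * Real.sqrt n)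
          ≤ (n : ℝ) ^ (ε * Real.log n + C + 1/2) := by
        have e : (n : ℝ) ^ (ε * Real.log n + C + 1/2)
            = (n:ℝ) ^ (ε * Real.log n) * ((n:ℝ) ^ C * (n:ℝ) ^ ((1:ℝ)/2)) := by
          rw [← Real.rpow_add hn0, ← Real.rpow_add hn0]
          congr 1; ring
        rw [hsq, e]
        exact mul_le_mul_of_nonneg_left
          (mul_le_mul_of_nonneg_right hkCn (by positivity)) (by positivity)
      have hdown : (n : ℝ) ^ (ε * Real.log n + C + 1/2) ≤ b ^ k * c := by
        have h1 : (n : ℝ) ^ ((4 * ε) * Real.log n)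
            = (n : ℝ) ^ (ε * Real.log n + C + 1/2) * (n : ℝ) ^ (3 * ε * Real.log n - C - 1/2) := by
          rw [← Real.rpow_add hn0]; congr 1; ring
        have h2 : (1 : ℝ) ≤ c * (n : ℝ) ^ (3 * ε * Real.log n - C - 1/2) := by
          have hge : (n : ℝ) ≤ (n : ℝ) ^ (3 * ε * Real.log n - C - 1/2) := by
            have := Real.rpow_le_rpow_of_exponent_le hn1 h3
            rwa [Real.rpow_one] at this
          have : 1/c ≤ (n : ℝ) ^ (3 * ε * Real.log n - C - 1/2) := le_trans h4 hge
          rw [div_le_iff₀ hc0] at this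
          calc (1:ℝ) ≤ (n : ℝ) ^ (3 * ε * Real.log n - C - 1/2) * c := this
            _ = c * (n : ℝ) ^ (3 * ε * Real.log n - C - 1/2) := by ring
        calc (n : ℝ) ^ (ε * Real.log n + C + 1/2)
            = (n : ℝ) ^ (ε * Real.log n + C + 1/2) * 1 := by ring
          _ ≤ (n : ℝ) ^ (ε * Real.log n + C + 1/2)
              * (c * (n : ℝ) ^ (3 * ε * Real.log n - C - 1/2)) := by
              exact mul_le_mul_of_nonneg_left h2 (by positivity)
          _ = (n : ℝ) ^ ((4 * ε) * Real.log n) * c := by rw [h1]; ring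
          _ ≤ b ^ k * c := mul_le_mul_of_nonneg_right hbk hc0.le
      exact le_trans hup hdown
    have : (n : ℝ) ^ (ε * Real.log n) ≤ b ^ k * c / ((k : ℝ) ^ C * Real.sqrt n) := by
      rw [le_div_iff₀ (by positivity)]
      exact hfin
    calc (n : ℝ) ^ (ε * Real.log n)
        ≤ b ^ k * c / ((k : ℝ) ^ C * Real.sqrt n) := this
      _ = γ ^ k / (k : ℝ) ^ C * (r * n) ^ k * (c / Real.sqrt n) ^ (2 * k + 1) := key.symm
      _ ≤ _ := le_trans step2 step1
  obtain ⟨N, hN⟩ := eventually_atTop.mp main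
  exact ⟨N, hN⟩
end
end
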